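/- arXiv:2301.10060 — 9 statements merged into one kernel-verified Lean document; each statement's English description precedes it below -/
import Mathlib

section
/- Let n be a natural number, let J be a real n×n skew-symmetric matrix, R a real n×n positive semidefinite matrix, Q a real n×n symmetric matrix, and set A = (J − R)Q. Let x : ℝ → ℝⁿ satisfy x' (t) = A x(t) at every t ∈ ℝ. Then the function V(t) = (1/2)·x(t)ᵀQ x(t) is antitone (nonincreasing) on ℝ; in particular V(t) ≤ V(s) whenever s ≤ t. -/
open Matrix

/-- For `A = (J - R) Q` with `J` skew-symmetric, `R` positive semidefinite and
`Q` symmetric, along any global solution of `x' = A x` the Lyapunov function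
`V(t) = (1/2) x(t)ᵀ Q x(t)` is nonincreasing. -/
theorem lyapunov_antitone (n : ℕ) (J R Q A : Matrix (Fin n) (Fin n) ℝ)
    (hJ : Jᵀ = -J) (hRsym : Rᵀ = R) (hRpsd : ∀ v : Fin n → ℝ, 0 ≤ v ⬝ᵥ (R *ᵥ v))
    (hQsym : Qᵀ = Q) (hA : A = (J - R) * Q)
    (x : ℝ → (Fin n → ℝ))
    (hx : ∀ t : ℝ, HasDerivAt x (A *ᵥ x t) t) :
    Antitone (fun t => (1 / 2 : ℝ) * (x t ⬝ᵥ (Q *ᵥ x t))) := by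
  have hxi : ∀ (i : Fin n) (t : ℝ), HasDerivAt (fun t => x t i) ((A *ᵥ x t) i) t :=
    fun i t => (hasDerivAt_pi.mp (hx t)) i
  have hV : ∀ t : ℝ, HasDerivAt (fun t => x t ⬝ᵥ (Q *ᵥ x t))
      ((A *ᵥ x t) ⬝ᵥ (Q *ᵥ x t) + x t ⬝ᵥ (Q *ᵥ (A *ᵥ x t))) t := by
    intro t
    have : HasDerivAt (fun t => ∑ i, x t i * ∑ j, Q i j * x t j)
        (∑ i, ((A *ᵥ x t) i * ∑ j, Q i j * x t j
          + x t i * ∑ j, Q i j * (A *ᵥ x t) j)) t := by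
      apply HasDerivAt.fun_sum
      intro i _
      exact (hxi i t).mul (HasDerivAt.fun_sum fun j _ => (hxi j t).const_mul (Q i j))
    convert this using 2 <;>
      simp [dotProduct, mulVec, Finset.sum_add_distrib]
  have hV2 : ∀ t : ℝ, HasDerivAt (fun t => (1 / 2 : ℝ) * (x t ⬝ᵥ (Q *ᵥ x t)))
      ((1 / 2 : ℝ) * ((A *ᵥ x t) ⬝ᵥ (Q *ᵥ x t) + x t ⬝ᵥ (Q *ᵥ (A *ᵥ x t)))) t :=
    fun t => (hV t).const_mul _
  apply antitone_of_deriv_nonpos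
  · exact fun t => (hV2 t).differentiableAt
  · intro t
    rw [(hV2 t).deriv]
    set v := x t
    set w := Q *ᵥ v with hw
    have hAv : A *ᵥ v = (J - R) *ᵥ w := by rw [hA, ← mulVec_mulVec]
    have h1 : (A *ᵥ v) ⬝ᵥ (Q *ᵥ v) = w ⬝ᵥ (A *ᵥ v) := dotProduct_comm _ _
    have h2 : v ⬝ᵥ (Q *ᵥ (A *ᵥ v)) = w ⬝ᵥ (A *ᵥ v) := by
      rw [dotProduct_mulVec, ← mulVec_transpose, hQsym]
    have hJw : w ⬝ᵥ (J *ᵥ w) = 0 := by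
      have := dotProduct_mulVec w J w
      rw [← mulVec_transpose, hJ, neg_mulVec, neg_dotProduct, dotProduct_comm] at this
      rw [dotProduct_comm]; linarith [this]
    have hkey : w ⬝ᵥ (A *ᵥ v) ≤ 0 := by
      rw [hAv, sub_mulVec, dotProduct_sub, hJw]
      simpa using hRpsd w
    rw [h1, h2]
    nlinarith [hkey]
end

section
/- Let n be a natural number, let J be a real n×n skew-symmetric matrix, R a real n×n positive semidefinite matrix, Q a real n×n positive definite matrix, and set A = (J − R)Q. Let x : ℝ → ℝⁿ satisfy x' (t) = A x(t) at every t ∈ ℝ. Then x(t)ᵀQ x(t) ≤ x(0)ᵀQ x(0) for all t ≥ 0, and there exists a constant C ≥ 0 such that ‖x(t)‖ ≤ C for all t ≥ 0 (global boundedness of the solution on [0, ∞)). -/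
open Matrix

private theorem coercive_aux (n : ℕ) (Q : Matrix (Fin n) (Fin n) ℝ)
    (hQpd : ∀ v : Fin n → ℝ, v ≠ 0 → 0 < v ⬝ᵥ (Q *ᵥ v)) :
    ∃ c : ℝ, 0 < c ∧ ∀ v : Fin n → ℝ, c * (v ⬝ᵥ v) ≤ v ⬝ᵥ (Q *ᵥ v) := by
  rcases Nat.eq_zero_or_pos n with hn | hn
  · subst hn
    exact ⟨1, one_pos, fun v => by simp [Subsingleton.elim v 0]⟩
  have hg : Continuous fun w : Fin n → ℝ => w ⬝ᵥ (Q *ᵥ w) := by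
    simp only [dotProduct, mulVec]
    fun_prop
  set S : Set (Fin n → ℝ) := {w | w ⬝ᵥ w = 1} with hS
  have hSc : IsCompact S := by
    apply Metric.isCompact_of_isClosed_isBounded
    · have : Continuous fun w : Fin n → ℝ => w ⬝ᵥ w := by
        simp only [dotProduct]; fun_prop
      exact isClosed_eq this continuous_const
    · rw [Metric.isBounded_iff_subset_closedBall 0]
      refine ⟨1, fun w hw => ?_⟩
      rw [Metric.mem_closedBall, dist_zero_right]
      rw [pi_norm_le_iff_of_nonneg zero_le_one]
      intro i
      have h1 : w i * w i ≤ 1 := by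
        rw [← hw]
        exact Finset.single_le_sum (f := fun j => w j * w j)
          (fun j _ => mul_self_nonneg _) (Finset.mem_univ i)
      rw [Real.norm_eq_abs]
      exact abs_le_one_iff_mul_self_le_one.mpr h1
  have hSne : S.Nonempty := by
    refine ⟨Pi.single ⟨0, hn⟩ 1, ?_⟩
    simp [hS, dotProduct, Pi.single_apply]
  obtain ⟨w0, hw0S, hw0min⟩ := hSc.exists_isMinOn hSne (hg.continuousOn)
  have hw0ne : w0 ≠ 0 := by
    intro h
    rw [hS] at hw0S
    simp [h] at hw0S
  refine ⟨w0 ⬝ᵥ (Q *ᵥ w0), hQpd w0 hw0ne, fun v => ?_⟩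
  by_cases hv : v = 0
  · simp [hv]
  have hnn : 0 ≤ v ⬝ᵥ v := Finset.sum_nonneg fun i _ => mul_self_nonneg _
  have hvv : 0 < v ⬝ᵥ v := by
    rcases hnn.lt_or_eq with h | h
    · exact h
    · exact absurd ((dotProduct_self_eq_zero).mp h.symm) hv
  set r : ℝ := Real.sqrt (v ⬝ᵥ v) with hr
  have hrpos : 0 < r := Real.sqrt_pos.mpr hvv
  have hr2 : r ^ 2 = v ⬝ᵥ v := Real.sq_sqrt hvv.le
  have hinv : r * r⁻¹ = 1 := mul_inv_cancel₀ hrpos.ne'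
  have hwS : (r⁻¹ • v) ∈ S := by
    rw [hS, Set.mem_setOf_eq, smul_dotProduct, dotProduct_smul, smul_eq_mul, smul_eq_mul]
    rw [← hr2]; nlinarith
  have hmin : w0 ⬝ᵥ (Q *ᵥ w0) ≤ (r⁻¹ • v) ⬝ᵥ (Q *ᵥ (r⁻¹ • v)) := hw0min hwS
  have hsc : (r⁻¹ • v) ⬝ᵥ (Q *ᵥ (r⁻¹ • v)) = r⁻¹ * (r⁻¹ * (v ⬝ᵥ (Q *ᵥ v))) := by
    rw [mulVec_smul, smul_dotProduct, dotProduct_smul, smul_eq_mul, smul_eq_mul]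
  rw [hsc] at hmin
  rw [← hr2]
  have h2 : w0 ⬝ᵥ (Q *ᵥ w0) * r ^ 2 ≤ (r⁻¹ * (r⁻¹ * (v ⬝ᵥ (Q *ᵥ v)))) * r ^ 2 :=
    mul_le_mul_of_nonneg_right hmin (sq_nonneg r)
  have h3 : (r⁻¹ * (r⁻¹ * (v ⬝ᵥ (Q *ᵥ v)))) * r ^ 2 = v ⬝ᵥ (Q *ᵥ v) := by
    field_simp
  linarith

private theorem dissipation_aux (n : ℕ) (J R Q : Matrix (Fin n) (Fin n) ℝ)
    (hJ : Jᵀ = -J) (hRsym : Rᵀ = R) (hQsym : Qᵀ = Q) (u : Fin n → ℝ) :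
    (((J - R) * Q) *ᵥ u) ⬝ᵥ (Q *ᵥ u) + u ⬝ᵥ (Q *ᵥ (((J - R) * Q) *ᵥ u))
      = -2 * ((Q *ᵥ u) ⬝ᵥ (R *ᵥ (Q *ᵥ u))) := by
  have key : ((J - R) * Q) *ᵥ u = (J - R) *ᵥ (Q *ᵥ u) := (mulVec_mulVec _ _ _).symm
  set y := Q *ᵥ u with hy
  have h1 : ((J - R) *ᵥ y) ⬝ᵥ y = y ⬝ᵥ ((-J - R) *ᵥ y) := by
    rw [dotProduct_comm, dotProduct_mulVec, ← mulVec_transpose, transpose_sub, hJ, hRsym,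
      dotProduct_comm]
  have h2 : u ⬝ᵥ (Q *ᵥ ((J - R) *ᵥ y)) = y ⬝ᵥ ((J - R) *ᵥ y) := by
    rw [dotProduct_mulVec, ← mulVec_transpose, hQsym, hy]
  rw [key, h1, h2, sub_mulVec, sub_mulVec, neg_mulVec, dotProduct_sub, dotProduct_sub,
    dotProduct_neg]
  ring

/-- For `A = (J - R) Q` with `J` skew-symmetric, `R` positive semidefinite and
`Q` positive definite, any global solution of `x' = A x` satisfies
`x(t)ᵀ Q x(t) ≤ x(0)ᵀ Q x(0)` for `t ≥ 0` and is bounded (in the Euclidean norm)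
on `[0, ∞)`. -/
theorem solution_bounded (n : ℕ) (J R Q A : Matrix (Fin n) (Fin n) ℝ)
    (hJ : Jᵀ = -J)
    (hRsym : Rᵀ = R) (hRpsd : ∀ v : Fin n → ℝ, 0 ≤ v ⬝ᵥ (R *ᵥ v))
    (hQsym : Qᵀ = Q) (hQpd : ∀ v : Fin n → ℝ, v ≠ 0 → 0 < v ⬝ᵥ (Q *ᵥ v))
    (hA : A = (J - R) * Q)
    (x : ℝ → (Fin n → ℝ))
    (hx : ∀ t : ℝ, HasDerivAt x (A *ᵥ x t) t) :
    (∀ t : ℝ, 0 ≤ t → x t ⬝ᵥ (Q *ᵥ x t) ≤ x 0 ⬝ᵥ (Q *ᵥ x 0)) ∧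
    ∃ C : ℝ, 0 ≤ C ∧ ∀ t : ℝ, 0 ≤ t →
      ‖(WithLp.equiv 2 (Fin n → ℝ)).symm (x t)‖ ≤ C := by
  set f : ℝ → ℝ := fun s => x s ⬝ᵥ (Q *ᵥ x s) with hfdef
  have hderiv : ∀ t : ℝ, HasDerivAt f
      ((A *ᵥ x t) ⬝ᵥ (Q *ᵥ x t) + x t ⬝ᵥ (Q *ᵥ (A *ᵥ x t))) t := by
    intro t
    have hxi : ∀ (i : Fin n), HasDerivAt (fun s => x s i) ((A *ᵥ x t) i) t := fun i =>
      ((ContinuousLinearMap.proj i : (Fin n → ℝ) →L[ℝ] ℝ)).hasFDerivAt.comp_hasDerivAt t (hx t)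
    have h : HasDerivAt (fun s => ∑ i, ∑ j, x s i * (Q i j * x s j))
        (∑ i, ∑ j, ((A *ᵥ x t) i * (Q i j * x t j) + x t i * (Q i j * (A *ᵥ x t) j))) t := by
      apply HasDerivAt.fun_sum
      intro i _
      apply HasDerivAt.fun_sum
      intro j _
      exact (hxi i).mul ((hxi j).const_mul (Q i j))
    convert h using 1
    · ext s
      simp [hfdef, dotProduct, mulVec, Finset.mul_sum]
    · simp [dotProduct, mulVec, Finset.mul_sum, Finset.sum_add_distrib]
  have hdval : ∀ t : ℝ,
      (A *ᵥ x t) ⬝ᵥ (Q *ᵥ x t) + x t ⬝ᵥ (Q *ᵥ (A *ᵥ x t)) ≤ 0 := by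
    intro t
    rw [hA, dissipation_aux n J R Q hJ hRsym hQsym (x t)]
    have := hRpsd (Q *ᵥ x t)
    linarith
  have hmono : ∀ t : ℝ, 0 ≤ t → f t ≤ f 0 := by
    intro t ht
    have hanti : AntitoneOn f (Set.Ici (0 : ℝ)) := by
      apply antitoneOn_of_deriv_nonpos (convex_Ici 0)
      · exact fun s _ => ((hderiv s).differentiableAt).continuousAt.continuousWithinAt
      · exact fun s _ => ((hderiv s).differentiableAt).differentiableWithinAt
      · intro s _
        rw [(hderiv s).deriv]
        exact hdval s
    exact hanti Set.self_mem_Ici (Set.mem_Ici.mpr ht) ht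
  refine ⟨hmono, ?_⟩
  obtain ⟨c, hc, hcoer⟩ := coercive_aux n Q hQpd
  have hf0 : 0 ≤ f 0 := by
    by_cases h0 : x 0 = 0
    · simp [hfdef, h0]
    · exact (hQpd (x 0) h0).le
  refine ⟨Real.sqrt (f 0 / c), Real.sqrt_nonneg _, fun t ht => ?_⟩
  have hnorm : ‖(WithLp.equiv 2 (Fin n → ℝ)).symm (x t)‖ = Real.sqrt (x t ⬝ᵥ x t) := by
    rw [EuclideanSpace.norm_eq]
    congr 1
    simp [dotProduct, sq]
  rw [hnorm]
  apply Real.sqrt_le_sqrt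
  rw [le_div_iff₀ hc, mul_comm]
  calc c * (x t ⬝ᵥ x t) ≤ x t ⬝ᵥ (Q *ᵥ x t) := hcoer (x t)
    _ ≤ f 0 := hmono t ht
end

section
/- Let n be a natural number, let J be a real n×n skew-symmetric matrix, R a real n×n positive semidefinite matrix, and Q a real n×n positive definite matrix. Then every eigenvalue μ of the matrix A = (J − R)Q (i.e., every μ in the spectrum over ℂ of the complexification of A) satisfies Re(μ) ≤ 0. -/
open Matrix
open scoped ComplexOrder

private lemma star_dotProduct' {n : ℕ} (a b : Fin n → ℂ) :
    star (a ⬝ᵥ b) = star a ⬝ᵥ star b := by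
  simp [dotProduct]

/-- For `A = (J - R) Q` with `J` skew-symmetric, `R` positive semidefinite and `Q`
positive definite, every eigenvalue of (the complexification of) `A` has
nonpositive real part. -/
theorem eigenvalues_re_nonpos (n : ℕ) (J R Q A : Matrix (Fin n) (Fin n) ℝ)
    (hJ : Jᵀ = -J)
    (hRsym : Rᵀ = R) (hRpsd : ∀ v : Fin n → ℝ, 0 ≤ v ⬝ᵥ (R *ᵥ v))
    (hQsym : Qᵀ = Q) (hQpd : ∀ v : Fin n → ℝ, v ≠ 0 → 0 < v ⬝ᵥ (Q *ᵥ v))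
    (hA : A = (J - R) * Q) :
    ∀ μ ∈ spectrum ℂ (A.map ((↑) : ℝ → ℂ)), μ.re ≤ 0 := by
  intro μ hμ
  classical
  have hR : R.PosSemidef := Matrix.posSemidef_iff_dotProduct_mulVec.mpr ⟨by simpa [Matrix.IsHermitian] using hRsym,
    fun x => by simpa using hRpsd x⟩
  have hQ : Q.PosDef := Matrix.posDef_iff_dotProduct_mulVec.mpr ⟨by simpa [Matrix.IsHermitian] using hQsym,
    fun x hx => by simpa using hQpd x hx⟩
  set f : ℝ →+* ℂ := Complex.ofRealHom with hf
  have hmap_psd : ∀ M : Matrix (Fin n) (Fin n) ℝ, M.PosSemidef → (M.map f).PosSemidef := by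
    intro M hM
    obtain ⟨B, hB⟩ : ∃ B : Matrix (Fin n) (Fin n) ℝ, M = Bᴴ * B := by
      open MatrixOrder in
      obtain ⟨X, hX, -, hXM⟩ := CFC.exists_sqrt_of_isSelfAdjoint_of_quasispectrumRestricts
        hM.isHermitian (QuasispectrumRestricts.nnreal_of_nonneg hM.nonneg)
      exact ⟨X, by rw [← hXM, ← Matrix.star_eq_conjTranspose, hX.star_eq]⟩
    have : M.map f = (B.map f)ᴴ * (B.map f) := by
      rw [hB, Matrix.map_mul]
      congr 1
      ext i j
      simp [Matrix.conjTranspose_apply, Matrix.map_apply, hf]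
    rw [this]
    exact Matrix.posSemidef_conjTranspose_mul_self _
  have hQc_psd : (Q.map f).PosSemidef := hmap_psd Q hQ.posSemidef
  have hRc_psd : (R.map f).PosSemidef := hmap_psd R hR
  have hdet : ((Q.map f)).det = f Q.det := (RingHom.map_det f Q).symm
  have hQc_unit : IsUnit (Q.map f).det := by
    rw [hdet]
    exact isUnit_iff_ne_zero.2 (by
      simp only [hf, Complex.ofRealHom_eq_coe, ne_eq, Complex.ofReal_eq_zero]
      exact hQ.det_pos.ne')
  -- eigenvector
  rw [spectrum.mem_iff, Matrix.isUnit_iff_isUnit_det, isUnit_iff_ne_zero, not_not] at hμ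
  obtain ⟨v, hv, hveq⟩ := (Matrix.exists_mulVec_eq_zero_iff).mpr hμ
  have hAv : (A.map f) *ᵥ v = μ • v := by
    rw [Matrix.sub_mulVec, Algebra.algebraMap_eq_smul_one, Matrix.smul_mulVec,
      Matrix.one_mulVec, sub_eq_zero] at hveq
    exact hveq.symm
  set x : Fin n → ℂ := (Q.map f) *ᵥ v with hx
  have hAc : A.map ⇑f = (J.map ⇑f - R.map ⇑f) * (Q.map ⇑f) := by
    rw [hA, Matrix.map_mul, Matrix.map_sub _ (map_sub f)]
  have hJRx : (J.map ⇑f - R.map ⇑f) *ᵥ x = μ • v := by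
    rw [hx, Matrix.mulVec_mulVec, ← hAc, hAv]
  set c : ℂ := star v ⬝ᵥ ((Q.map ⇑f) *ᵥ v) with hc
  have hc_nonneg : (0:ℂ) ≤ c := hQc_psd.dotProduct_mulVec_nonneg v
  have hc_ne : c ≠ 0 := by
    intro h
    have h2 := (hQc_psd.dotProduct_mulVec_zero_iff v).mp (hc ▸ h)
    apply hv
    have h3 := congrArg (fun w => ((Q.map ⇑f)⁻¹) *ᵥ w) h2
    simpa [Matrix.mulVec_mulVec,
      Matrix.nonsing_inv_mul _ hQc_unit, Matrix.one_mulVec] using h3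
  obtain ⟨hre0, him0⟩ := Complex.le_def.mp hc_nonneg
  have hc_im : c.im = 0 := by simpa using him0.symm
  have hc_re : 0 < c.re := by
    rcases lt_or_eq_of_le (by simpa using hre0) with h | h
    · exact h
    · exact absurd (Complex.ext h.symm hc_im) hc_ne
  -- star x ⬝ᵥ v = c
  have hQherm : (Q.map ⇑f)ᴴ = Q.map ⇑f := hQc_psd.1
  have hxv : star x ⬝ᵥ v = c := by
    rw [hx, Matrix.star_mulVec, hQherm, hc, Matrix.dotProduct_mulVec]
  have hkey : star x ⬝ᵥ ((J.map ⇑f - R.map ⇑f) *ᵥ x) = μ * c := by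
    rw [hJRx, dotProduct_smul, hxv, smul_eq_mul]
  -- skew part
  set z : ℂ := star x ⬝ᵥ ((J.map ⇑f) *ᵥ x) with hz
  have hJherm : (J.map ⇑f)ᴴ = -(J.map ⇑f) := by
    ext i j
    have h1 : J j i = -(J i j) := by
      have := congrFun (congrFun hJ i) j
      simpa [Matrix.transpose_apply] using this
    simp [Matrix.conjTranspose_apply, Matrix.map_apply, hf, h1]
  have hzstar : star z = -z := by
    rw [hz, star_dotProduct', star_star, Matrix.star_mulVec, hJherm, dotProduct_comm,
      Matrix.vecMul_neg, neg_dotProduct, ← Matrix.dotProduct_mulVec]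
  have hz_re : z.re = 0 := by
    have := congrArg Complex.re hzstar
    simp only [Complex.star_def, Complex.conj_re, Complex.neg_re] at this
    linarith
  -- psd part
  set r : ℂ := star x ⬝ᵥ ((R.map ⇑f) *ᵥ x) with hr
  have hr_re : 0 ≤ r.re := (Complex.le_def.mp (hRc_psd.dotProduct_mulVec_nonneg x)).1
  have hsplit : (μ * c).re = z.re - r.re := by
    rw [← hkey, Matrix.sub_mulVec, dotProduct_sub]
    simp [hz, hr]
  have hmu : μ.re * c.re ≤ 0 := by
    have h1 : (μ * c).re = μ.re * c.re - μ.im * c.im := Complex.mul_re μ c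
    rw [hc_im, mul_zero, sub_zero] at h1
    rw [hsplit, hz_re, zero_sub] at h1
    linarith
  nlinarith
end

section
/- Let n be a natural number, let J be a real n×n skew-symmetric matrix, and let R and Q be real n×n positive definite matrices. Then every eigenvalue μ of the matrix A = (J − R)Q (i.e., every μ in the spectrum over ℂ of the complexification of A) satisfies Re(μ) < 0; that is, A is a Hurwitz (asymptotically stable) matrix. -/
open Matrix

private lemma re_quad' (n : ℕ) (M : Matrix (Fin n) (Fin n) ℝ) (x : Fin n → ℂ) :
    (star x ⬝ᵥ ((M.map ((↑) : ℝ → ℂ)) *ᵥ x)).re =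
      (fun i => (x i).re) ⬝ᵥ (M *ᵥ fun i => (x i).re)
      + (fun i => (x i).im) ⬝ᵥ (M *ᵥ fun i => (x i).im) := by
  simp only [dotProduct, mulVec, map_apply, Pi.star_apply, Finset.mul_sum, Complex.re_sum]
  rw [← Finset.sum_add_distrib]
  refine Finset.sum_congr rfl fun i _ => ?_
  rw [← Finset.sum_add_distrib]
  refine Finset.sum_congr rfl fun j _ => ?_
  simp [Complex.mul_re, Complex.mul_im]

private lemma quad_pos' (n : ℕ) (M : Matrix (Fin n) (Fin n) ℝ)
    (hpd : ∀ v : Fin n → ℝ, v ≠ 0 → 0 < v ⬝ᵥ (M *ᵥ v)) (x : Fin n → ℂ) (hx : x ≠ 0) :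
    0 < (star x ⬝ᵥ ((M.map ((↑) : ℝ → ℂ)) *ᵥ x)).re := by
  rw [re_quad']
  set a : Fin n → ℝ := fun i => (x i).re with ha
  set b : Fin n → ℝ := fun i => (x i).im with hb
  have hab : a ≠ 0 ∨ b ≠ 0 := by
    by_contra h
    push_neg at h
    apply hx
    funext i
    have h1 : a i = 0 := by rw [h.1]; rfl
    have h2 : b i = 0 := by rw [h.2]; rfl
    exact Complex.ext h1 h2
  have haux : ∀ w : Fin n → ℝ, 0 ≤ w ⬝ᵥ (M *ᵥ w) := by
    intro w
    rcases eq_or_ne w 0 with rfl | hw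
    · simp
    · exact (hpd w hw).le
  rcases hab with h | h
  · have := hpd a h; have := haux b; linarith
  · have := hpd b h; have := haux a; linarith

private lemma skew_quad_zero' (n : ℕ) (J : Matrix (Fin n) (Fin n) ℝ) (hJ : Jᵀ = -J)
    (w : Fin n → ℝ) : w ⬝ᵥ (J *ᵥ w) = 0 := by
  have h : w ⬝ᵥ (J *ᵥ w) = (Jᵀ *ᵥ w) ⬝ᵥ w := by
    rw [mulVec_transpose, ← dotProduct_mulVec, dotProduct_comm]
  rw [hJ, neg_mulVec, neg_dotProduct, dotProduct_comm] at h
  have h2 : w ⬝ᵥ (J *ᵥ w) = (J *ᵥ w) ⬝ᵥ w := dotProduct_comm _ _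
  linarith

/-- For `A = (J - R) Q` with `J` skew-symmetric and `R`, `Q` positive definite,
every eigenvalue of (the complexification of) `A` has strictly negative real part,
i.e. `A` is Hurwitz. -/
theorem eigenvalues_re_neg (n : ℕ) (J R Q A : Matrix (Fin n) (Fin n) ℝ)
    (hJ : Jᵀ = -J)
    (hRsym : Rᵀ = R) (hRpd : ∀ v : Fin n → ℝ, v ≠ 0 → 0 < v ⬝ᵥ (R *ᵥ v))
    (hQsym : Qᵀ = Q) (hQpd : ∀ v : Fin n → ℝ, v ≠ 0 → 0 < v ⬝ᵥ (Q *ᵥ v))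
    (hA : A = (J - R) * Q) :
    ∀ μ ∈ spectrum ℂ (A.map ((↑) : ℝ → ℂ)), μ.re < 0 := by
  intro μ hμ
  -- obtain an eigenvector
  rw [spectrum.mem_iff, Matrix.isUnit_iff_isUnit_det] at hμ
  have hdet : ((algebraMap ℂ (Matrix (Fin n) (Fin n) ℂ)) μ - A.map ((↑) : ℝ → ℂ)).det = 0 := by
    by_contra h
    exact hμ (isUnit_iff_ne_zero.mpr h)
  obtain ⟨v, hv0, hv⟩ := (Matrix.exists_mulVec_eq_zero_iff).mpr hdet
  have heig : (A.map ((↑) : ℝ → ℂ)) *ᵥ v = μ • v := by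
    have h1 : ((algebraMap ℂ (Matrix (Fin n) (Fin n) ℂ)) μ) *ᵥ v
        - (A.map ((↑) : ℝ → ℂ)) *ᵥ v = 0 := by rw [← sub_mulVec, hv]
    have h2 : ((algebraMap ℂ (Matrix (Fin n) (Fin n) ℂ)) μ) *ᵥ v = μ • v := by
      funext i
      simp [Matrix.algebraMap_eq_diagonal, mulVec_diagonal]
    rw [h2] at h1
    exact (eq_of_sub_eq_zero h1).symm
  -- complexifications
  set Jc := J.map ((↑) : ℝ → ℂ) with hJc
  set Rc := R.map ((↑) : ℝ → ℂ) with hRc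
  set Qc := Q.map ((↑) : ℝ → ℂ) with hQc
  have hAc : A.map ((↑) : ℝ → ℂ) = (Jc - Rc) * Qc := by
    have hc : ((↑) : ℝ → ℂ) = ⇑Complex.ofRealHom := rfl
    rw [hJc, hRc, hQc, hA, hc, Matrix.map_mul (f := Complex.ofRealHom),
      Matrix.map_sub _ (by simp : ∀ a b : ℝ, Complex.ofRealHom (a - b)
        = Complex.ofRealHom a - Complex.ofRealHom b)]
  have hQcH : Qcᴴ = Qc := by
    ext i j
    have := congrFun (congrFun hQsym i) j
    simp only [hQc, conjTranspose_apply, map_apply, Complex.star_def, Complex.conj_ofReal]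
    exact_mod_cast this
  set x := Qc *ᵥ v with hx
  have hxeig : (Jc - Rc) *ᵥ x = μ • v := by
    rw [hx, mulVec_mulVec, ← hAc, heig]
  -- c = star v ⬝ᵥ Qc v is a positive real
  set c := star v ⬝ᵥ (Qc *ᵥ v) with hc
  have hcre : 0 < c.re := quad_pos' n Q hQpd v hv0
  have hxv : star x ⬝ᵥ v = c := by
    rw [hx, star_mulVec, hQcH, ← dotProduct_mulVec, hc]
  have hcim : c.im = 0 := by
    have h1 : c = star (star (Qc *ᵥ v) ⬝ᵥ v) := by
      rw [hc, star_dotProduct]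
    have h2 : c = star c := by
      conv_lhs => rw [h1]
      rw [← hx, hxv]
    have := congrArg Complex.im h2
    simp only [Complex.star_def, Complex.conj_im] at this
    linarith
  have hx0 : x ≠ 0 := by
    intro h
    have : star x ⬝ᵥ v = 0 := by rw [h]; simp
    rw [hxv] at this
    rw [this] at hcre
    simp at hcre
  -- main equation
  have heq : star x ⬝ᵥ (Jc *ᵥ x) - star x ⬝ᵥ (Rc *ᵥ x) = μ * c := by
    have : star x ⬝ᵥ ((Jc - Rc) *ᵥ x) = μ * c := by
      rw [hxeig, dotProduct_smul, hxv, smul_eq_mul]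
    rw [← this, sub_mulVec, dotProduct_sub]
  -- real parts
  have hJre : (star x ⬝ᵥ (Jc *ᵥ x)).re = 0 := by
    rw [hJc, re_quad', skew_quad_zero' n J hJ, skew_quad_zero' n J hJ]
    simp
  have hRre : 0 < (star x ⬝ᵥ (Rc *ᵥ x)).re := quad_pos' n R hRpd x hx0
  have hre := congrArg Complex.re heq
  rw [Complex.sub_re, Complex.mul_re, hJre, hcim] at hre
  nlinarith
end

section
/- Let n be a natural number and let A be a real n×n matrix all of whose eigenvalues have strictly negative real part (A is Hurwitz). Then there exist real n×n matrices J, R, Q such that J is skew-symmetric, R is positive definite, Q is positive definite, and A = (J − R)Q. -/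
open Matrix Polynomial

lemma hd_mem_spectrum_iff {n : ℕ} (M : Matrix (Fin n) (Fin n) ℂ) (μ : ℂ) :
    μ ∈ spectrum ℂ M ↔ (μ • (1 : Matrix (Fin n) (Fin n) ℂ) - M).det = 0 := by
  rw [spectrum.mem_iff, Matrix.isUnit_iff_isUnit_det]
  simp [Algebra.algebraMap_eq_smul_one, isUnit_iff_ne_zero]

lemma hd_eval_charpoly {n : ℕ} (M : Matrix (Fin n) (Fin n) ℂ) (μ : ℂ) :
    M.charpoly.eval μ = (μ • (1 : Matrix (Fin n) (Fin n) ℂ) - M).det := by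
  rw [Matrix.charpoly, ← coe_evalRingHom, RingHom.map_det]
  congr 1
  ext i j
  by_cases h : i = j <;>
    simp [h, charmatrix_apply, Matrix.diagonal_apply, Matrix.one_apply, Matrix.smul_apply]

lemma hd_isUnit_aeval_prod {n : ℕ} (N : Matrix (Fin n) (Fin n) ℂ) (s : Multiset ℂ)
    (h : ∀ a ∈ s, IsUnit (aeval N (X - C a))) :
    IsUnit (aeval N (s.map fun a => X - C a).prod) := by
  induction s using Multiset.induction_on with
  | empty => simp
  | cons a s ih =>
      rw [Multiset.map_cons, Multiset.prod_cons, _root_.map_mul]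
      exact (h a (Multiset.mem_cons_self a s)).mul
        (ih fun b hb => h b (Multiset.mem_cons_of_mem hb))

lemma hd_aeval_comm {n : ℕ} {M B : Matrix (Fin n) (Fin n) ℂ}
    (h : Mᵀ * B = B * (-M)) (p : ℂ[X]) :
    (aeval Mᵀ p) * B = B * (aeval (-M) p) := by
  have hp : ∀ k : ℕ, Mᵀ ^ k * B = B * (-M) ^ k := by
    intro k
    induction k with
    | zero => simp
    | succ k ih => rw [pow_succ, pow_succ, mul_assoc, h, ← mul_assoc, ih, mul_assoc]
  rw [aeval_eq_sum_range, aeval_eq_sum_range, Finset.sum_mul, Finset.mul_sum]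
  exact Finset.sum_congr rfl fun i _ => by rw [smul_mul_assoc, hp i, mul_smul_comm]

/-- Sylvester injectivity over ℂ for Hurwitz matrices. -/
lemma hd_sylvester_inj {n : ℕ} (M : Matrix (Fin n) (Fin n) ℂ)
    (hM : ∀ μ ∈ spectrum ℂ M, μ.re < 0)
    (B : Matrix (Fin n) (Fin n) ℂ) (hB : Mᵀ * B + B * M = 0) : B = 0 := by
  have h : Mᵀ * B = B * (-M) := by
    rw [mul_neg, eq_neg_iff_add_eq_zero]; exact hB
  set p : ℂ[X] := (-M).charpoly with hpdef
  have hcomm := hd_aeval_comm h p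
  have hCH : aeval (-M) p = 0 := Matrix.aeval_self_charpoly (-M)
  rw [hCH, mul_zero] at hcomm
  -- p splits over ℂ
  have hmonic : p.Monic := Matrix.charpoly_monic _
  have hsplits : p.Splits := IsAlgClosed.splits p
  have hfact : p = (p.roots.map fun a => X - C a).prod :=
    hsplits.eq_prod_roots_of_monic hmonic
  -- every root has positive real part
  have hroot : ∀ a ∈ p.roots, IsUnit (aeval Mᵀ (X - C a)) := by
    intro a ha
    have hre : 0 < a.re := by
      have h1 : p.eval a = 0 := by
        have := Polynomial.isRoot_of_mem_roots ha
        exact this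
      rw [hd_eval_charpoly (-M) a] at h1
      have h2 : ((-a) • (1 : Matrix (Fin n) (Fin n) ℂ) - M).det = 0 := by
        have : (-a) • (1 : Matrix (Fin n) (Fin n) ℂ) - M
            = (-1 : ℂ) • (a • (1 : Matrix (Fin n) (Fin n) ℂ) - (-M)) := by
          ext i j; simp; ring
        rw [this, Matrix.det_smul, h1, mul_zero]
      have h3 : (-a) ∈ spectrum ℂ M := (hd_mem_spectrum_iff M (-a)).2 h2
      have := hM _ h3
      simp only [Complex.neg_re] at this
      linarith
    -- Mᵀ - a • 1 is a unit since a ∉ spectrum M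
    have ha' : a ∉ spectrum ℂ M := by
      intro hmem
      have := hM a hmem
      linarith
    rw [hd_mem_spectrum_iff] at ha'
    have hdet : (Mᵀ - a • (1 : Matrix (Fin n) (Fin n) ℂ)).det ≠ 0 := by
      have heq : Mᵀ - a • (1 : Matrix (Fin n) (Fin n) ℂ)
          = ((-1 : ℂ) • (a • (1 : Matrix (Fin n) (Fin n) ℂ) - M))ᵀ := by
        ext i j
        simp [Matrix.transpose_apply, Matrix.one_apply]
        by_cases hij : i = j
        · simp [hij]
        · simp [hij, Ne.symm hij]
      rw [heq, Matrix.det_transpose, Matrix.det_smul]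
      intro hc
      rcases mul_eq_zero.1 hc with h | h
      · simpa using h
      · exact ha' h
    have : aeval Mᵀ (X - C a) = Mᵀ - a • (1 : Matrix (Fin n) (Fin n) ℂ) := by
      simp [Algebra.algebraMap_eq_smul_one]
    rw [this, Matrix.isUnit_iff_isUnit_det]
    exact hdet.isUnit
  have hunit : IsUnit (aeval Mᵀ p) := by
    rw [hfact] at hcomm ⊢
    exact hd_isUnit_aeval_prod Mᵀ p.roots hroot
  obtain ⟨u, hu⟩ := hunit
  calc B = 1 * B := (one_mul B).symm
    _ = (↑u⁻¹ * ↑u) * B := by rw [Units.inv_mul]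
    _ = ↑u⁻¹ * (↑u * B) := mul_assoc _ _ _
    _ = 0 := by rw [hu, hcomm, mul_zero]

/-- homotopy path -/
noncomputable def hdAt {n : ℕ} (A : Matrix (Fin n) (Fin n) ℝ) (t : ℝ) :
    Matrix (Fin n) (Fin n) ℝ := t • A - (1 - t) • 1

lemma hdAt_map {n : ℕ} (A : Matrix (Fin n) (Fin n) ℝ) (t : ℝ) :
    (hdAt A t).map ((↑) : ℝ → ℂ)
      = (t : ℂ) • A.map ((↑) : ℝ → ℂ) - ((1 : ℂ) - t) • 1 := by
  ext i j
  by_cases h : i = j <;>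
    simp [hdAt, Matrix.map_apply, Matrix.smul_apply, Matrix.one_apply, h] <;> push_cast <;> ring

lemma hdAt_hurwitz {n : ℕ} (A : Matrix (Fin n) (Fin n) ℝ)
    (hH : ∀ μ ∈ spectrum ℂ (A.map ((↑) : ℝ → ℂ)), μ.re < 0)
    {t : ℝ} (ht : t ∈ Set.Icc (0:ℝ) 1) :
    ∀ μ ∈ spectrum ℂ ((hdAt A t).map ((↑) : ℝ → ℂ)), μ.re < 0 := by
  intro μ hμ
  rw [hd_mem_spectrum_iff, hdAt_map] at hμ
  set Ma := A.map ((↑) : ℝ → ℂ)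
  have key : ((μ + (1 - t)) • (1 : Matrix (Fin n) (Fin n) ℂ) - (t:ℂ) • Ma).det = 0 := by
    rw [← hμ]; congr 1; ext i j
    by_cases h : i = j <;> simp [Matrix.one_apply, h] <;> ring
  rcases eq_or_lt_of_le ht.1 with h0 | h0
  · -- t = 0
    subst h0
    simp only [Complex.ofReal_zero, zero_smul, sub_zero] at key
    rcases Nat.eq_zero_or_pos n with hn | hn
    · exfalso
      subst hn
      simp [Matrix.det_fin_zero] at key
    · rw [Matrix.det_smul, Matrix.det_one, mul_one] at key
      have h1 := pow_eq_zero_iff (by simpa using hn.ne') |>.1 key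
      have hμ1 : μ = -1 := by
        push_cast at h1
        linear_combination h1
      rw [hμ1]
      norm_num
  · -- t > 0
    have htne : (t : ℂ) ≠ 0 := by
      simp only [ne_eq, Complex.ofReal_eq_zero]; linarith
    set ν : ℂ := (μ + (1 - t)) / t with hν
    have key2 : ((t:ℂ) • (ν • (1 : Matrix (Fin n) (Fin n) ℂ) - Ma)).det = 0 := by
      rw [← key]; congr 1; ext i j
      by_cases h : i = j <;> simp [Matrix.one_apply, h, hν]
      field_simp
    rw [Matrix.det_smul] at key2
    have hν_spec : ν ∈ spectrum ℂ Ma := by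
      rw [hd_mem_spectrum_iff]
      rcases mul_eq_zero.1 key2 with hc | hc
      · exact absurd hc (pow_ne_zero _ htne)
      · exact hc
    have hre := hH ν hν_spec
    have hμeq : μ = (t:ℂ) * ν - (1 - t) := by
      rw [hν]; field_simp; ring
    have : μ.re = t * ν.re - (1 - t) := by
      rw [hμeq]; simp [Complex.sub_re, Complex.mul_re]
    rw [this]
    nlinarith [ht.2, h0]

lemma hd_sylvester_inj_real {n : ℕ} (A : Matrix (Fin n) (Fin n) ℝ)
    (hM : ∀ μ ∈ spectrum ℂ (A.map ((↑) : ℝ → ℂ)), μ.re < 0)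
    (B : Matrix (Fin n) (Fin n) ℝ) (hB : Aᵀ * B + B * A = 0) : B = 0 := by
  have h : (A.map ((↑) : ℝ → ℂ))ᵀ * B.map ((↑) : ℝ → ℂ)
      + B.map ((↑) : ℝ → ℂ) * A.map ((↑) : ℝ → ℂ) = 0 := by
    ext i j
    have := congrFun (congrFun hB i) j
    simp only [Matrix.add_apply, Matrix.mul_apply, Matrix.transpose_apply,
      Matrix.map_apply, Matrix.zero_apply] at this ⊢
    exact_mod_cast this
  have hz := hd_sylvester_inj _ hM _ h
  ext i j
  have := congrFun (congrFun hz i) j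
  simpa [Matrix.map_apply] using this

def hdVec {n : ℕ} (P : Matrix (Fin n) (Fin n) ℝ) : (Fin n × Fin n) → ℝ :=
  fun p => P p.1 p.2

def hdUnvec {n : ℕ} (x : Fin n × Fin n → ℝ) : Matrix (Fin n) (Fin n) ℝ :=
  Matrix.of fun i j => x (i, j)

def hdSylM {n : ℕ} (B : Matrix (Fin n) (Fin n) ℝ) :
    Matrix (Fin n × Fin n) (Fin n × Fin n) ℝ :=
  Matrix.of fun p q =>
    Bᵀ p.1 q.1 * (if p.2 = q.2 then 1 else 0) + (if p.1 = q.1 then 1 else 0) * B q.2 p.2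

lemma hdVec_unvec {n : ℕ} (x : Fin n × Fin n → ℝ) : hdVec (hdUnvec x) = x := by
  funext p; cases p; rfl

lemma hdVec_inj {n : ℕ} {P Q : Matrix (Fin n) (Fin n) ℝ} (h : hdVec P = hdVec Q) : P = Q := by
  ext i j; exact congrFun h (i, j)

lemma hdSylM_mulVec {n : ℕ} (B P : Matrix (Fin n) (Fin n) ℝ) :
    hdSylM B *ᵥ hdVec P = hdVec (Bᵀ * P + P * B) := by
  funext p
  obtain ⟨i, j⟩ := p
  simp only [hdSylM, hdVec, Matrix.mulVec, dotProduct, Fintype.sum_prod_type,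
    Matrix.of_apply, add_mul, ite_mul, one_mul, zero_mul, Finset.sum_add_distrib,
    Matrix.add_apply, Matrix.mul_apply, Matrix.transpose_apply, mul_ite, mul_one, mul_zero]
  congr 1
  · rw [Finset.sum_comm]
    simp [Finset.sum_ite_eq']
  · simp [Finset.sum_ite_eq]
    exact Finset.sum_congr rfl fun l _ => mul_comm _ _

lemma hdSylM_isUnit_det {n : ℕ} {B : Matrix (Fin n) (Fin n) ℝ}
    (h : ∀ P : Matrix (Fin n) (Fin n) ℝ, Bᵀ * P + P * B = 0 → P = 0) :
    IsUnit (hdSylM B).det := by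
  rw [← Matrix.isUnit_iff_isUnit_det, ← Matrix.mulVec_injective_iff_isUnit]
  intro x y hxy
  rw [← hdVec_unvec x, ← hdVec_unvec y] at hxy ⊢
  rw [hdSylM_mulVec, hdSylM_mulVec] at hxy
  have := hdVec_inj hxy
  have hzero : Bᵀ * (hdUnvec x - hdUnvec y) + (hdUnvec x - hdUnvec y) * B = 0 := by
    have e : Bᵀ * (hdUnvec x - hdUnvec y) + (hdUnvec x - hdUnvec y) * B
        = (Bᵀ * hdUnvec x + hdUnvec x * B) - (Bᵀ * hdUnvec y + hdUnvec y * B) := by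
      rw [Matrix.mul_sub, Matrix.sub_mul]; abel
    rw [e, this, sub_self]
  have := h _ hzero
  have : hdUnvec x = hdUnvec y := by
    have := sub_eq_zero.1 (by simpa using this)
    exact this
  rw [this]

noncomputable def hdP {n : ℕ} (B : Matrix (Fin n) (Fin n) ℝ) : Matrix (Fin n) (Fin n) ℝ :=
  hdUnvec ((hdSylM B)⁻¹ *ᵥ hdVec (-1))

lemma hdP_eq {n : ℕ} {B : Matrix (Fin n) (Fin n) ℝ}
    (h : ∀ P : Matrix (Fin n) (Fin n) ℝ, Bᵀ * P + P * B = 0 → P = 0) :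
    Bᵀ * hdP B + hdP B * B = -1 := by
  apply hdVec_inj
  rw [← hdSylM_mulVec]
  unfold hdP
  rw [hdVec_unvec, Matrix.mulVec_mulVec, Matrix.mul_nonsing_inv _ (hdSylM_isUnit_det h),
    Matrix.one_mulVec]

lemma hdP_unique {n : ℕ} {B P : Matrix (Fin n) (Fin n) ℝ}
    (h : ∀ P : Matrix (Fin n) (Fin n) ℝ, Bᵀ * P + P * B = 0 → P = 0)
    (hP : Bᵀ * P + P * B = -1) : P = hdP B := by
  have e : Bᵀ * (P - hdP B) + (P - hdP B) * B
      = (Bᵀ * P + P * B) - (Bᵀ * hdP B + hdP B * B) := by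
    rw [Matrix.mul_sub, Matrix.sub_mul]; abel
  have := h (P - hdP B) (by rw [e, hP, hdP_eq h, sub_self])
  have := sub_eq_zero.1 (by simpa using this)
  exact this

lemma hdP_symm {n : ℕ} {B : Matrix (Fin n) (Fin n) ℝ}
    (h : ∀ P : Matrix (Fin n) (Fin n) ℝ, Bᵀ * P + P * B = 0 → P = 0) :
    (hdP B)ᵀ = hdP B := by
  apply hdP_unique h
  have := congrArg Matrix.transpose (hdP_eq h)
  rw [Matrix.transpose_add, Matrix.transpose_mul, Matrix.transpose_mul,
    Matrix.transpose_transpose, Matrix.transpose_neg, Matrix.transpose_one] at this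
  rw [← this]; abel

lemma hdP_isUnit_det {n : ℕ} {B : Matrix (Fin n) (Fin n) ℝ}
    (h : ∀ P : Matrix (Fin n) (Fin n) ℝ, Bᵀ * P + P * B = 0 → P = 0) :
    IsUnit (hdP B).det := by
  rw [← Matrix.isUnit_iff_isUnit_det, ← Matrix.mulVec_injective_iff_isUnit]
  intro x y hxy
  have hv : hdP B *ᵥ (x - y) = 0 := by
    rw [Matrix.mulVec_sub, hxy, sub_self]
  set v := x - y with hvdef
  have hdot : v ⬝ᵥ ((Bᵀ * hdP B + hdP B * B) *ᵥ v) = 0 := by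
    rw [Matrix.add_mulVec, dotProduct_add, ← Matrix.mulVec_mulVec,
      ← Matrix.mulVec_mulVec, hv, Matrix.mulVec_zero, dotProduct_zero,
      Matrix.dotProduct_mulVec]
    have : v ᵥ* hdP B = 0 := by
      rw [← hdP_symm h, Matrix.vecMul_transpose, hv]
    rw [this, zero_dotProduct, add_zero]
  rw [hdP_eq h] at hdot
  have : v ⬝ᵥ v = 0 := by
    rw [Matrix.neg_mulVec, Matrix.one_mulVec, dotProduct_neg] at hdot
    linarith
  have := dotProduct_self_eq_zero.1 this
  exact sub_eq_zero.1 this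

lemma hd_psd_pd {n : ℕ} (P : Matrix (Fin n) (Fin n) ℝ)
    (hsym : Pᵀ = P) (hdet : IsUnit P.det)
    (hpsd : ∀ v : Fin n → ℝ, 0 ≤ v ⬝ᵥ (P *ᵥ v)) :
    ∀ v : Fin n → ℝ, v ≠ 0 → 0 < v ⬝ᵥ (P *ᵥ v) := by
  intro v hv
  rcases lt_or_eq_of_le (hpsd v) with h | h
  · exact h
  -- v ⬝ᵥ P v = 0 ; show P *ᵥ v = 0, contradiction with invertibility
  exfalso
  have hPv : P *ᵥ v = 0 := by
    have hb : ∀ y : Fin n → ℝ, (P *ᵥ v) ⬝ᵥ y = 0 := by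
      intro y
      set a := y ⬝ᵥ (P *ᵥ y) with ha
      set b := (P *ᵥ v) ⬝ᵥ y with hb
      have ha0 : 0 ≤ a := hpsd y
      have hexp : ∀ s : ℝ, 0 ≤ s ^ 2 * a + 2 * s * b := by
        intro s
        have h0 := hpsd (v + s • y)
        have : (v + s • y) ⬝ᵥ (P *ᵥ (v + s • y))
            = v ⬝ᵥ (P *ᵥ v) + s * ((P *ᵥ v) ⬝ᵥ y) + s * (v ⬝ᵥ (P *ᵥ y))
              + s ^ 2 * (y ⬝ᵥ (P *ᵥ y)) := by
          rw [Matrix.mulVec_add, Matrix.mulVec_smul]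
          rw [add_dotProduct, smul_dotProduct,
            dotProduct_add, dotProduct_add,
            dotProduct_smul, dotProduct_smul]
          have hvy : y ⬝ᵥ (P *ᵥ v) = (P *ᵥ v) ⬝ᵥ y := dotProduct_comm _ _
          rw [hvy]
          ring_nf
        have hsymdot : v ⬝ᵥ (P *ᵥ y) = (P *ᵥ v) ⬝ᵥ y := by
          rw [Matrix.dotProduct_mulVec]
          nth_rewrite 1 [← hsym]
          rw [Matrix.vecMul_transpose]
        rw [this, hsymdot, ← h] at h0
        calc (0:ℝ) ≤ 0 + s * ((P *ᵥ v) ⬝ᵥ y) + s * ((P *ᵥ v) ⬝ᵥ y) + s ^ 2 * a := h0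
          _ = s ^ 2 * a + 2 * s * b := by ring
      by_contra hbne
      have hapos : (0:ℝ) < a + 1 := by linarith
      have h1 := hexp (-b / (a + 1))
      have h2 : (-b/(a+1))^2 * a + 2*(-b/(a+1))*b = (b^2*a - 2*b^2*(a+1))/(a+1)^2 := by
        field_simp
        ring
      rw [h2] at h1
      have h3 : 0 ≤ b^2*a - 2*b^2*(a+1) := by
        have := mul_nonneg h1 (le_of_lt (pow_pos hapos 2))
        rwa [div_mul_cancel₀] at this
        positivity
      have hb2 : 0 < b^2 := by positivity
      nlinarith [h3, hb2, ha0]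
    have := hb (P *ᵥ v)
    exact dotProduct_self_eq_zero.1 this
  have hinj := Matrix.mulVec_injective_iff_isUnit.2 ((Matrix.isUnit_iff_isUnit_det P).2 hdet)
  exact hv (hinj (by rw [hPv, Matrix.mulVec_zero]))

-- sorried dependencies
lemma hd_dot_self_pos {n : ℕ} {v : Fin n → ℝ} (hv : v ≠ 0) : 0 < v ⬝ᵥ v := by
  rcases lt_or_eq_of_le (Finset.sum_nonneg fun i _ => mul_self_nonneg (v i)) with h | h
  · exact h
  · exact absurd (dotProduct_self_eq_zero.1 h.symm) hv

lemma hd_exists_P {n : ℕ} (A : Matrix (Fin n) (Fin n) ℝ)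
    (hH : ∀ μ ∈ spectrum ℂ (A.map ((↑) : ℝ → ℂ)), μ.re < 0) :
    ∃ P : Matrix (Fin n) (Fin n) ℝ, Pᵀ = P ∧
      (∀ v : Fin n → ℝ, v ≠ 0 → 0 < v ⬝ᵥ (P *ᵥ v)) ∧ Aᵀ * P + P * A = -1 := by
  -- injectivity of the Sylvester operator along the path
  have hinj : ∀ t ∈ Set.Icc (0:ℝ) 1,
      ∀ P : Matrix (Fin n) (Fin n) ℝ, (hdAt A t)ᵀ * P + P * (hdAt A t) = 0 → P = 0 :=
    fun t ht P hP => hd_sylvester_inj_real _ (hdAt_hurwitz A hH ht) P hP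
  set g : ℝ → Matrix (Fin n) (Fin n) ℝ := fun t => hdP (hdAt A t) with hg
  -- continuity of the entries of `g` on `Icc 0 1`
  have hScont : Continuous fun t => hdSylM (hdAt A t) := by
    apply continuous_matrix
    intro p q
    simp only [hdSylM, hdAt, Matrix.of_apply, Matrix.transpose_apply, Matrix.sub_apply,
      Matrix.smul_apply, smul_eq_mul]
    fun_prop
  have hdet_ne : ∀ t ∈ Set.Icc (0:ℝ) 1, (hdSylM (hdAt A t)).det ≠ 0 :=
    fun t ht => (hdSylM_isUnit_det (hinj t ht)).ne_zero
  have hgcont : ∀ i j, ContinuousOn (fun t => g t i j) (Set.Icc (0:ℝ) 1) := by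
    intro i j
    have hrw : ∀ t, g t i j
        = ((hdSylM (hdAt A t)).det)⁻¹
          * ((hdSylM (hdAt A t)).adjugate *ᵥ hdVec (-1)) (i, j) := by
      intro t
      show (hdUnvec ((hdSylM (hdAt A t))⁻¹ *ᵥ hdVec (-1))) i j = _
      rw [Matrix.inv_def, Ring.inverse_eq_inv, Matrix.smul_mulVec]
      simp [hdUnvec, Pi.smul_apply, smul_eq_mul]
    simp only [hrw]
    apply ContinuousOn.mul
    · exact ContinuousOn.inv₀ (hScont.matrix_det.continuousOn) hdet_ne
    · exact Continuous.continuousOn <| by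
        have : Continuous fun t => (hdSylM (hdAt A t)).adjugate *ᵥ hdVec (-1) :=
          (hScont.matrix_adjugate).matrix_mulVec continuous_const
        exact (continuous_apply (i, j)).comp this
  -- work in the subtype X = Icc 0 1
  set X := Set.Icc (0:ℝ) 1
  haveI : PreconnectedSpace X := Subtype.preconnectedSpace isPreconnected_Icc
  have hgc : ∀ i j, Continuous fun τ : X => g ↑τ i j :=
    fun i j => (hgcont i j).restrict
  have hf : Continuous fun p : X × (Fin n → ℝ) => p.2 ⬝ᵥ (g ↑p.1 *ᵥ p.2) := by
    simp only [dotProduct, Matrix.mulVec]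
    apply continuous_finset_sum
    intro i _
    exact ((continuous_apply i).comp continuous_snd).mul
      (continuous_finset_sum _ fun j _ =>
        ((hgc i j).comp continuous_fst).mul ((continuous_apply j).comp continuous_snd))
  set S : Set X := {τ | ∀ v : Fin n → ℝ, v ≠ 0 → 0 < v ⬝ᵥ (g ↑τ *ᵥ v)} with hS
  -- 0 ∈ S
  have h0X : (0:ℝ) ∈ X := by constructor <;> norm_num
  have h1X : (1:ℝ) ∈ X := by constructor <;> norm_num
  have h0mem : (⟨0, h0X⟩ : X) ∈ S := by
    have hA0 : hdAt A 0 = -1 := by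
      unfold hdAt; simp
    have hsol : (hdAt A 0)ᵀ * ((1/2:ℝ) • (1 : Matrix (Fin n) (Fin n) ℝ))
        + ((1/2:ℝ) • (1 : Matrix (Fin n) (Fin n) ℝ)) * hdAt A 0 = -1 := by
      rw [hA0, Matrix.transpose_neg, Matrix.transpose_one, Matrix.neg_mul, Matrix.one_mul,
        Matrix.mul_neg, Matrix.mul_one, ← neg_add, ← add_smul]
      norm_num
    have hg0 : g 0 = (1/2:ℝ) • (1 : Matrix (Fin n) (Fin n) ℝ) :=
      (hdP_unique (hinj 0 h0X) hsol).symm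
    intro v hv
    rw [hg0, Matrix.smul_mulVec, Matrix.one_mulVec, dotProduct_smul]
    have := hd_dot_self_pos hv
    rw [smul_eq_mul]
    positivity
  -- S is closed
  have hSclosed : IsClosed S := by
    have heq : S = ⋂ (v : Fin n → ℝ), {τ : X | 0 ≤ v ⬝ᵥ (g ↑τ *ᵥ v)} := by
      ext τ
      simp only [Set.mem_iInter, Set.mem_setOf_eq, hS]
      constructor
      · intro h v
        by_cases hv : v = 0
        · simp [hv]
        · exact le_of_lt (h v hv)
      · intro h
        exact hd_psd_pd (g ↑τ) (hdP_symm (hinj ↑τ τ.2)) (hdP_isUnit_det (hinj ↑τ τ.2)) h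
    rw [heq]
    exact isClosed_iInter fun v =>
      isClosed_le continuous_const (hf.comp (continuous_id.prodMk continuous_const))
  -- S is open
  have hSopen : IsOpen S := by
    rw [← isClosed_compl_iff]
    set C : Set (X × (Fin n → ℝ)) :=
      {p | p.2 ∈ Metric.sphere (0 : Fin n → ℝ) 1 ∧ p.2 ⬝ᵥ (g ↑p.1 *ᵥ p.2) ≤ 0} with hC
    have hCclosed : IsClosed C :=
      IsClosed.inter (Metric.isClosed_sphere.preimage continuous_snd)
        (isClosed_le hf continuous_const)
    have hCsub : C ⊆ Set.univ ×ˢ Metric.sphere (0 : Fin n → ℝ) 1 :=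
      fun p hp => ⟨Set.mem_univ _, hp.1⟩
    have hCcomp : IsCompact C :=
      IsCompact.of_isClosed_subset (isCompact_univ.prod (isCompact_sphere _ _)) hCclosed hCsub
    have himg : Sᶜ = Prod.fst '' C := by
      ext τ
      constructor
      · intro hτ
        simp only [Set.mem_compl_iff, hS, Set.mem_setOf_eq] at hτ
        push_neg at hτ
        obtain ⟨v, hv, hle⟩ := hτ
        have hnv : ‖v‖ ≠ 0 := norm_ne_zero_iff.2 hv
        refine ⟨(τ, ‖v‖⁻¹ • v), ⟨?_, ?_⟩, rfl⟩
        · rw [mem_sphere_zero_iff_norm, norm_smul, norm_inv, norm_norm]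
          field_simp
        · rw [smul_dotProduct, Matrix.mulVec_smul, dotProduct_smul]
          simp only [smul_eq_mul]
          have h1 : (0:ℝ) ≤ ‖v‖⁻¹ := by positivity
          exact mul_nonpos_of_nonneg_of_nonpos h1 (mul_nonpos_of_nonneg_of_nonpos h1 hle)
      · rintro ⟨⟨σ, v⟩, ⟨hsphere, hle⟩, rfl⟩
        simp only [Set.mem_compl_iff, hS, Set.mem_setOf_eq]
        intro hmem
        have hv : v ≠ 0 := by
          rw [mem_sphere_zero_iff_norm] at hsphere
          intro hc; rw [hc, norm_zero] at hsphere; norm_num at hsphere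
        exact absurd (hmem v hv) (not_lt.2 hle)
    rw [himg]
    exact (hCcomp.image continuous_fst).isClosed
  -- conclude S = univ
  have huniv : S = Set.univ := IsClopen.eq_univ ⟨hSclosed, hSopen⟩ ⟨_, h0mem⟩
  have h1mem : (⟨1, h1X⟩ : X) ∈ S := huniv ▸ Set.mem_univ _
  have hA1 : hdAt A 1 = A := by unfold hdAt; simp
  refine ⟨g 1, ?_, ?_, ?_⟩
  · exact hdP_symm (hinj 1 h1X)
  · exact h1mem
  · have h := hdP_eq (hinj 1 h1X)
    rw [hA1] at h
    show Aᵀ * hdP (hdAt A 1) + hdP (hdAt A 1) * A = -1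
    rw [hA1]
    exact h

lemma hd_assemble {n : ℕ} (A P : Matrix (Fin n) (Fin n) ℝ)
    (hsym : Pᵀ = P) (hpd : ∀ v : Fin n → ℝ, v ≠ 0 → 0 < v ⬝ᵥ (P *ᵥ v))
    (hP : Aᵀ * P + P * A = -1) :
    ∃ J R Q : Matrix (Fin n) (Fin n) ℝ,
      Jᵀ = -J ∧
      (Rᵀ = R ∧ ∀ v : Fin n → ℝ, v ≠ 0 → 0 < v ⬝ᵥ (R *ᵥ v)) ∧
      (Qᵀ = Q ∧ ∀ v : Fin n → ℝ, v ≠ 0 → 0 < v ⬝ᵥ (Q *ᵥ v)) ∧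
      A = (J - R) * Q := by
  have hdet : IsUnit P.det := by
    rw [← Matrix.isUnit_iff_isUnit_det, ← Matrix.mulVec_injective_iff_isUnit]
    intro x y hxy
    by_contra hne
    have hv : P *ᵥ (x - y) = 0 := by rw [Matrix.mulVec_sub, hxy, sub_self]
    have := hpd (x - y) (fun hc => hne (sub_eq_zero.1 hc))
    rw [hv, dotProduct_zero] at this
    exact lt_irrefl 0 this
  have hPP : P * P⁻¹ = 1 := Matrix.mul_nonsing_inv _ hdet
  have hPP' : P⁻¹ * P = 1 := Matrix.nonsing_inv_mul _ hdet
  have hinvsym : P⁻¹ᵀ = P⁻¹ := by rw [Matrix.transpose_nonsing_inv, hsym]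
  -- key identity
  have I1 : P⁻¹ * Aᵀ + A * P⁻¹ = -(P⁻¹ * P⁻¹) := by
    have e := congrArg (fun M => P⁻¹ * M * P⁻¹) hP
    simp only [Matrix.mul_add, Matrix.add_mul, Matrix.mul_neg, Matrix.neg_mul,
      Matrix.mul_one] at e
    have t1 : P⁻¹ * (Aᵀ * P) * P⁻¹ = P⁻¹ * Aᵀ := by
      rw [Matrix.mul_assoc P⁻¹ (Aᵀ * P) P⁻¹, Matrix.mul_assoc Aᵀ P P⁻¹, hPP, Matrix.mul_one]
    have t2 : P⁻¹ * (P * A) * P⁻¹ = A * P⁻¹ := by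
      rw [← Matrix.mul_assoc P⁻¹ P A, hPP', Matrix.one_mul]
    rw [← t1, ← t2]
    exact e
  refine ⟨(1/2 : ℝ) • (A * P⁻¹ - P⁻¹ * Aᵀ), (1/2 : ℝ) • (P⁻¹ * P⁻¹), P, ?_, ⟨?_, ?_⟩, ⟨hsym, hpd⟩, ?_⟩
  · rw [Matrix.transpose_smul, Matrix.transpose_sub, Matrix.transpose_mul, Matrix.transpose_mul,
      Matrix.transpose_transpose, hinvsym]
    rw [← smul_neg, neg_sub]
  · rw [Matrix.transpose_smul, Matrix.transpose_mul, hinvsym]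
  · intro v hv
    have hwne : P⁻¹ *ᵥ v ≠ 0 := by
      intro hc
      have : (P * P⁻¹) *ᵥ v = 0 := by
        rw [← Matrix.mulVec_mulVec, hc, Matrix.mulVec_zero]
      rw [hPP, Matrix.one_mulVec] at this
      exact hv this
    have key : v ⬝ᵥ ((P⁻¹ * P⁻¹) *ᵥ v) = (P⁻¹ *ᵥ v) ⬝ᵥ (P⁻¹ *ᵥ v) := by
      rw [← Matrix.mulVec_mulVec, Matrix.dotProduct_mulVec]
      nth_rewrite 1 [← hinvsym]
      rw [Matrix.vecMul_transpose]
    rw [Matrix.smul_mulVec, dotProduct_smul, key]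
    have : 0 < (P⁻¹ *ᵥ v) ⬝ᵥ (P⁻¹ *ᵥ v) := by
      rcases lt_or_eq_of_le (Finset.sum_nonneg fun i _ => mul_self_nonneg ((P⁻¹ *ᵥ v) i)) with h | h
      · exact h
      · exact absurd (dotProduct_self_eq_zero.1 h.symm) hwne
    positivity
  · have hJR : (1/2 : ℝ) • (A * P⁻¹ - P⁻¹ * Aᵀ) - (1/2 : ℝ) • (P⁻¹ * P⁻¹) = A * P⁻¹ := by
      have hW : P⁻¹ * P⁻¹ = -(P⁻¹ * Aᵀ) - A * P⁻¹ := by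
        rw [← neg_eq_iff_eq_neg] at I1
        rw [← I1]; abel
      rw [hW]
      module
    rw [hJR, Matrix.mul_assoc, hPP', Matrix.mul_one]

/-- Every Hurwitz matrix `A` admits a decomposition `A = (J - R) Q` with `J`
skew-symmetric and `R`, `Q` positive definite. -/
theorem hurwitz_decomposition (n : ℕ) (A : Matrix (Fin n) (Fin n) ℝ)
    (hH : ∀ μ ∈ spectrum ℂ (A.map ((↑) : ℝ → ℂ)), μ.re < 0) :
    ∃ J R Q : Matrix (Fin n) (Fin n) ℝ,
      Jᵀ = -J ∧
      (Rᵀ = R ∧ ∀ v : Fin n → ℝ, v ≠ 0 → 0 < v ⬝ᵥ (R *ᵥ v)) ∧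
      (Qᵀ = Q ∧ ∀ v : Fin n → ℝ, v ≠ 0 → 0 < v ⬝ᵥ (Q *ᵥ v)) ∧
      A = (J - R) * Q := by
  obtain ⟨P, hsym, hpd, hP⟩ := hd_exists_P A hH
  exact hd_assemble A P hsym hpd hP
end

section
/- Let n be a natural number. A real n×n matrix A has all of its eigenvalues with strictly negative real part (A is Hurwitz) if and only if there exist real n×n matrices J, R, Q with J skew-symmetric, R positive definite, Q positive definite, and A = (J − R)Q. -/
open Matrix

namespace Hur

variable {n : ℕ}

noncomputable def cplx (M : Matrix (Fin n) (Fin n) ℝ) : Matrix (Fin n) (Fin n) ℂ :=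
  M.map ((↑) : ℝ → ℂ)

lemma cplx_eq (M : Matrix (Fin n) (Fin n) ℝ) :
    cplx M = (Complex.ofRealHom.mapMatrix : Matrix (Fin n) (Fin n) ℝ →+* _) M := rfl

lemma cplx_mul (M N : Matrix (Fin n) (Fin n) ℝ) : cplx (M * N) = cplx M * cplx N := by
  simp [cplx_eq, _root_.map_mul]

lemma cplx_one : cplx (1 : Matrix (Fin n) (Fin n) ℝ) = 1 := by simp [cplx_eq]

lemma cplx_add (M N : Matrix (Fin n) (Fin n) ℝ) : cplx (M + N) = cplx M + cplx N := by
  simp [cplx_eq, map_add]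

lemma cplx_sub (M N : Matrix (Fin n) (Fin n) ℝ) : cplx (M - N) = cplx M - cplx N := by
  simp [cplx_eq, map_sub]

lemma mem_spectrum_iff {K : Type*} [Field K] {M : Matrix (Fin n) (Fin n) K} {μ : K} :
    μ ∈ spectrum K M ↔ ∃ x, x ≠ 0 ∧ M *ᵥ x = μ • x := by
  rw [spectrum.mem_iff, Matrix.isUnit_iff_isUnit_det, isUnit_iff_ne_zero, not_ne_iff,
    ← Matrix.exists_mulVec_eq_zero_iff]
  constructor
  · rintro ⟨v, hv, h⟩
    refine ⟨v, hv, ?_⟩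
    have := h
    rw [Matrix.sub_mulVec] at this
    have h2 : algebraMap K (Matrix (Fin n) (Fin n) K) μ *ᵥ v = μ • v := by
      ext i
      simp [Matrix.algebraMap_eq_diagonal, Matrix.mulVec_diagonal, Pi.algebraMap_def,
        Algebra.algebraMap_self_apply]
    rw [h2, sub_eq_zero] at this
    exact this.symm
  · rintro ⟨v, hv, h⟩
    refine ⟨v, hv, ?_⟩
    rw [Matrix.sub_mulVec]
    have h2 : algebraMap K (Matrix (Fin n) (Fin n) K) μ *ᵥ v = μ • v := by
      ext i
      simp [Matrix.algebraMap_eq_diagonal, Matrix.mulVec_diagonal, Pi.algebraMap_def,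
        Algebra.algebraMap_self_apply]
    rw [h2, h, sub_self]

lemma dot_re (S : Matrix (Fin n) (Fin n) ℝ) (x : Fin n → ℂ) :
    (star x ⬝ᵥ ((S.map ((↑) : ℝ → ℂ)) *ᵥ x)).re =
      (fun i => (x i).re) ⬝ᵥ (S *ᵥ fun i => (x i).re) +
      (fun i => (x i).im) ⬝ᵥ (S *ᵥ fun i => (x i).im) := by
  simp only [dotProduct, Matrix.mulVec, Matrix.map_apply, Pi.star_apply, Complex.star_def,
    Finset.mul_sum]
  rw [Complex.re_sum, ← Finset.sum_add_distrib]
  refine Finset.sum_congr rfl fun i _ => ?_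
  rw [Complex.re_sum, ← Finset.sum_add_distrib]
  refine Finset.sum_congr rfl fun j _ => ?_
  simp [Complex.mul_re, Complex.mul_im]

lemma dot_im (S : Matrix (Fin n) (Fin n) ℝ) (x : Fin n → ℂ) :
    (star x ⬝ᵥ ((S.map ((↑) : ℝ → ℂ)) *ᵥ x)).im =
      (fun i => (x i).re) ⬝ᵥ (S *ᵥ fun i => (x i).im) -
      (fun i => (x i).im) ⬝ᵥ (S *ᵥ fun i => (x i).re) := by
  simp only [dotProduct, Matrix.mulVec, Matrix.map_apply, Pi.star_apply, Complex.star_def,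
    Finset.mul_sum]
  rw [Complex.im_sum, ← Finset.sum_sub_distrib]
  refine Finset.sum_congr rfl fun i _ => ?_
  rw [Complex.im_sum, ← Finset.sum_sub_distrib]
  refine Finset.sum_congr rfl fun j _ => ?_
  simp [Complex.mul_re, Complex.mul_im]
  ring

lemma skew_quad {J : Matrix (Fin n) (Fin n) ℝ} (hJ : Jᵀ = -J) (v : Fin n → ℝ) :
    v ⬝ᵥ (J *ᵥ v) = 0 := by
  have h : v ⬝ᵥ (J *ᵥ v) = v ⬝ᵥ (Jᵀ *ᵥ v) := by
    rw [Matrix.mulVec_transpose, Matrix.dotProduct_mulVec, dotProduct_comm]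
  rw [hJ] at h
  simp only [Matrix.neg_mulVec, dotProduct_neg] at h
  linarith

lemma symm_bilin {S : Matrix (Fin n) (Fin n) ℝ} (hS : Sᵀ = S) (v w : Fin n → ℝ) :
    v ⬝ᵥ (S *ᵥ w) = w ⬝ᵥ (S *ᵥ v) := by
  conv_lhs => rw [← hS]
  rw [Matrix.mulVec_transpose, Matrix.dotProduct_mulVec, dotProduct_comm]

lemma dot_self_pos {v : Fin n → ℝ} (hv : v ≠ 0) : 0 < v ⬝ᵥ v := by
  have h : ∃ i, v i ≠ 0 := by
    by_contra h; push_neg at h; exact hv (funext h)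
  obtain ⟨i, hi⟩ := h
  unfold dotProduct
  exact Finset.sum_pos' (fun j _ => mul_self_nonneg (v j))
    ⟨i, Finset.mem_univ i, mul_self_pos.mpr hi⟩

lemma quad_nonneg {S : Matrix (Fin n) (Fin n) ℝ}
    (hS : ∀ v : Fin n → ℝ, v ≠ 0 → 0 < v ⬝ᵥ (S *ᵥ v)) (v : Fin n → ℝ) :
    0 ≤ v ⬝ᵥ (S *ᵥ v) := by
  by_cases h : v = 0
  · simp [h]
  · exact (hS v h).le

lemma re_im_ne {x : Fin n → ℂ} (hx : x ≠ 0) :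
    (fun i => (x i).re) ≠ 0 ∨ (fun i => (x i).im) ≠ 0 := by
  by_contra h
  push_neg at h
  refine hx (funext fun i => ?_)
  have h1 := congrFun h.1 i
  have h2 := congrFun h.2 i
  simp only [Pi.zero_apply] at h1 h2 ⊢
  exact Complex.ext h1 h2

lemma pos_quad_re {S : Matrix (Fin n) (Fin n) ℝ}
    (hS : ∀ v : Fin n → ℝ, v ≠ 0 → 0 < v ⬝ᵥ (S *ᵥ v)) {x : Fin n → ℂ} (hx : x ≠ 0) :
    0 < (star x ⬝ᵥ ((S.map ((↑) : ℝ → ℂ)) *ᵥ x)).re := by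
  rw [dot_re]
  rcases re_im_ne hx with h | h
  · have := hS _ h
    have := quad_nonneg hS (fun i => (x i).im)
    linarith
  · have := hS _ h
    have := quad_nonneg hS (fun i => (x i).re)
    linarith

lemma skew_quad_re {J : Matrix (Fin n) (Fin n) ℝ} (hJ : Jᵀ = -J) (x : Fin n → ℂ) :
    (star x ⬝ᵥ ((J.map ((↑) : ℝ → ℂ)) *ᵥ x)).re = 0 := by
  rw [dot_re, skew_quad hJ, skew_quad hJ, add_zero]

lemma symm_quad_im {S : Matrix (Fin n) (Fin n) ℝ} (hS : Sᵀ = S) (x : Fin n → ℂ) :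
    (star x ⬝ᵥ ((S.map ((↑) : ℝ → ℂ)) *ᵥ x)).im = 0 := by
  rw [dot_im, symm_bilin hS, sub_self]

lemma cplx_pow (M : Matrix (Fin n) (Fin n) ℝ) (k : ℕ) : cplx (M ^ k) = cplx M ^ k := by
  simp [cplx_eq, map_pow]

lemma cplx_det (M : Matrix (Fin n) (Fin n) ℝ) : (cplx M).det = (M.det : ℂ) := by
  rw [cplx_eq, ← RingHom.map_det]; rfl

section Analysis

attribute [local instance] Matrix.frobeniusSeminormedAddCommGroup
  Matrix.frobeniusNormedAddCommGroup Matrix.frobeniusNormedSpace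
  Matrix.frobeniusNormedRing Matrix.frobeniusNormedAlgebra

lemma lyap_exists {B : Matrix (Fin n) (Fin n) ℝ}
    (h : spectralRadius ℂ (cplx B) < 1) :
    ∃ P : Matrix (Fin n) (Fin n) ℝ, Pᵀ = P ∧ (∀ v : Fin n → ℝ, v ≠ 0 → 0 < v ⬝ᵥ (P *ᵥ v)) ∧
      P - Bᵀ * P * B = 1 := by
  haveI : CompleteSpace (Matrix (Fin n) (Fin n) ℝ) := FiniteDimensional.complete ℝ _
  obtain ⟨c, hc1, hc2⟩ := ENNReal.lt_iff_exists_nnreal_btwn.mp h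
  have htend := spectrum.pow_nnnorm_pow_one_div_tendsto_nhds_spectralRadius (cplx B)
  have hev : ∀ᶠ k : ℕ in Filter.atTop,
      ((‖(cplx B) ^ k‖₊ : ENNReal) ^ (1 / (k : ℝ))) < (c : ENNReal) :=
    htend.eventually_lt_const hc1
  -- norm bound on powers of B
  have hbound : ∀ᶠ k : ℕ in Filter.atTop, ‖B ^ k‖ ≤ (c : ℝ) ^ k := by
    filter_upwards [hev, Filter.eventually_ge_atTop 1] with k hk hk1
    have hknz : (k : ℝ) ≠ 0 := by positivity
    have h1 : ((‖(cplx B) ^ k‖₊ : ENNReal) ^ (1 / (k : ℝ))) ^ (k : ℕ) ≤ (c : ENNReal) ^ k :=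
      pow_le_pow_left' hk.le k
    rw [← ENNReal.rpow_natCast ((‖(cplx B) ^ k‖₊ : ENNReal) ^ (1 / (k : ℝ))) k,
      ← ENNReal.rpow_mul, one_div, inv_mul_cancel₀ hknz, ENNReal.rpow_one] at h1
    have h2 : ‖(cplx B) ^ k‖₊ ≤ c ^ k := by
      rw [← ENNReal.coe_pow] at h1
      exact_mod_cast h1
    have h3 : ‖B ^ k‖ = ‖(cplx B) ^ k‖ := by
      rw [← cplx_pow]
      exact (Matrix.frobenius_norm_map_eq (B ^ k) ((↑) : ℝ → ℂ)
        (fun a => Complex.norm_real a)).symm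
    rw [h3]
    calc ‖(cplx B) ^ k‖ = (‖(cplx B) ^ k‖₊ : ℝ) := rfl
    _ ≤ ((c ^ k : NNReal) : ℝ) := by exact_mod_cast h2
    _ = (c : ℝ) ^ k := by push_cast; ring
  -- summability of the series
  have hsum : Summable (fun k : ℕ => (Bᵀ) ^ k * B ^ k) := by
    apply Summable.of_norm_bounded_eventually_nat (g := fun k => ((c : ℝ) ^ 2) ^ k)
    · exact summable_geometric_of_lt_one (by positivity) (by
        have : (c : ℝ) < 1 := by exact_mod_cast hc2
        nlinarith [c.coe_nonneg])
    · filter_upwards [hbound] with k hk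
      calc ‖(Bᵀ) ^ k * B ^ k‖ ≤ ‖(Bᵀ) ^ k‖ * ‖B ^ k‖ := norm_mul_le _ _
      _ = ‖B ^ k‖ * ‖B ^ k‖ := by
          rw [← Matrix.transpose_pow, Matrix.frobenius_norm_transpose]
      _ ≤ (c : ℝ) ^ k * (c : ℝ) ^ k := by
          have := norm_nonneg (B ^ k)
          nlinarith
      _ = ((c : ℝ) ^ 2) ^ k := by ring
  set P := ∑' k : ℕ, (Bᵀ) ^ k * B ^ k with hPdef
  have hP : HasSum (fun k : ℕ => (Bᵀ) ^ k * B ^ k) P := hsum.hasSum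
  refine ⟨P, ?_, ?_, ?_⟩
  · -- symmetry
    have ht : Continuous (fun M : Matrix (Fin n) (Fin n) ℝ => Mᵀ) := by
      have : IsLinearMap ℝ (fun M : Matrix (Fin n) (Fin n) ℝ => Mᵀ) :=
        ⟨fun M N => Matrix.transpose_add M N, fun r M => Matrix.transpose_smul r M⟩
      exact (IsLinearMap.mk' _ this).continuous_of_finiteDimensional
    have := hP.map (AddMonoidHom.mk' (fun M : Matrix (Fin n) (Fin n) ℝ => Mᵀ)
      (fun M N => Matrix.transpose_add M N)) ht
    have this2 : HasSum (fun k : ℕ => ((Bᵀ) ^ k * B ^ k)ᵀ) Pᵀ := by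
      simpa [Function.comp_def] using this
    have heq : (fun k : ℕ => ((Bᵀ) ^ k * B ^ k)ᵀ) = fun k : ℕ => (Bᵀ) ^ k * B ^ k := by
      funext k
      rw [Matrix.transpose_mul, Matrix.transpose_pow, Matrix.transpose_pow,
        Matrix.transpose_transpose]
    rw [heq] at this2
    exact this2.unique hP
  · -- positivity
    intro v hv
    have hlin : IsLinearMap ℝ (fun M : Matrix (Fin n) (Fin n) ℝ => v ⬝ᵥ (M *ᵥ v)) := by
      constructor
      · intro M N; rw [Matrix.add_mulVec, dotProduct_add]
      · intro r M; rw [Matrix.smul_mulVec, dotProduct_smul]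
    have hq := hP.map (AddMonoidHom.mk' (fun M : Matrix (Fin n) (Fin n) ℝ => v ⬝ᵥ (M *ᵥ v))
      (fun M N => by rw [Matrix.add_mulVec, dotProduct_add]))
      (IsLinearMap.mk' _ hlin).continuous_of_finiteDimensional
    simp only [AddMonoidHom.mk'_apply, Function.comp_def] at hq
    have hterm : ∀ k : ℕ, v ⬝ᵥ (((Bᵀ) ^ k * B ^ k) *ᵥ v) = (B ^ k *ᵥ v) ⬝ᵥ (B ^ k *ᵥ v) := by
      intro k
      rw [← Matrix.mulVec_mulVec, ← Matrix.transpose_pow, Matrix.dotProduct_mulVec,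
        Matrix.vecMul_transpose]
    have hnonneg : ∀ k : ℕ, k ≠ 0 → 0 ≤ v ⬝ᵥ (((Bᵀ) ^ k * B ^ k) *ᵥ v) := by
      intro k _
      rw [hterm k]
      exact Finset.sum_nonneg fun i _ => mul_self_nonneg _
    have h0 : v ⬝ᵥ (((Bᵀ) ^ 0 * B ^ 0) *ᵥ v) = v ⬝ᵥ v := by simp
    have hle := le_hasSum hq 0 hnonneg
    rw [h0] at hle
    have hvv : 0 < v ⬝ᵥ v := by
      obtain ⟨i, hi⟩ : ∃ i, v i ≠ 0 := by
        by_contra hcon; push_neg at hcon; exact hv (funext hcon)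
      exact Finset.sum_pos' (fun j _ => mul_self_nonneg (v j))
        ⟨i, Finset.mem_univ i, mul_self_pos.mpr hi⟩
    exact lt_of_lt_of_le hvv hle
  · -- Stein equation
    have hlin : IsLinearMap ℝ (fun M : Matrix (Fin n) (Fin n) ℝ => Bᵀ * M * B) := by
      constructor
      · intro M N; rw [mul_add, add_mul]
      · intro r M; rw [mul_smul_comm, smul_mul_assoc]
    have hq := hP.map (AddMonoidHom.mk' (fun M : Matrix (Fin n) (Fin n) ℝ => Bᵀ * M * B)
      (fun M N => by rw [mul_add, add_mul]))
      (IsLinearMap.mk' _ hlin).continuous_of_finiteDimensional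
    simp only [AddMonoidHom.mk'_apply, Function.comp_def] at hq
    have hterm : (fun k : ℕ => Bᵀ * ((Bᵀ) ^ k * B ^ k) * B) =
        fun k : ℕ => (Bᵀ) ^ (k + 1) * B ^ (k + 1) := by
      funext k
      rw [pow_succ' (Bᵀ) k, pow_succ B k]
      noncomm_ring
    rw [hterm] at hq
    have hsum' : ∑' k : ℕ, (Bᵀ) ^ (k + 1) * B ^ (k + 1) = Bᵀ * P * B := hq.tsum_eq
    have key : P = 1 + Bᵀ * P * B := by
      rw [← hsum']
      calc P = ∑' k : ℕ, (Bᵀ) ^ k * B ^ k := hPdef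
      _ = (Bᵀ) ^ 0 * B ^ 0 + ∑' k : ℕ, (Bᵀ) ^ (k + 1) * B ^ (k + 1) := hsum.tsum_eq_zero_add
      _ = 1 + ∑' k : ℕ, (Bᵀ) ^ (k + 1) * B ^ (k + 1) := by simp
    rw [sub_eq_iff_eq_add']
    conv_lhs => rw [key]
    abel

end Analysis

lemma B_spec {A : Matrix (Fin n) (Fin n) ℝ} (H : ∀ μ ∈ spectrum ℂ (cplx A), μ.re < 0) :
    (1 - A).det ≠ 0 ∧
    ∀ z ∈ spectrum ℂ (cplx ((1 + A) * (1 - A)⁻¹)), ‖z‖₊ < 1 := by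
  have hdet : (1 - A).det ≠ 0 := by
    intro h0
    have hdetC : (cplx (1 - A)).det = 0 := by rw [cplx_det, h0, Complex.ofReal_zero]
    obtain ⟨v, hv, hMv⟩ := Matrix.exists_mulVec_eq_zero_iff.mpr hdetC
    have h1 : cplx A *ᵥ v = (1 : ℂ) • v := by
      rw [cplx_sub, cplx_one, Matrix.sub_mulVec, Matrix.one_mulVec, sub_eq_zero] at hMv
      rw [← hMv, one_smul]
    have := H 1 (mem_spectrum_iff.mpr ⟨v, hv, h1⟩)
    norm_num at this
  refine ⟨hdet, ?_⟩
  intro z hz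
  obtain ⟨x, hx, hBx⟩ := mem_spectrum_iff.mp hz
  set M := 1 - A with hM
  have hMCdet : (cplx M).det ≠ 0 := by
    rw [cplx_det]; exact_mod_cast hdet
  have hMCunit : IsUnit (cplx M).det := isUnit_iff_ne_zero.mpr hMCdet
  set u := (cplx M)⁻¹ *ᵥ x with hu
  have hxu : cplx M *ᵥ u = x := by
    rw [hu, Matrix.mulVec_mulVec, Matrix.mul_nonsing_inv _ hMCunit, Matrix.one_mulVec]
  have hune : u ≠ 0 := by
    intro h0
    rw [h0, Matrix.mulVec_zero] at hxu
    exact hx hxu.symm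
  have hBM : cplx ((1 + A) * M⁻¹) * cplx M = 1 + cplx A := by
    rw [← cplx_mul, Matrix.nonsing_inv_mul_cancel_right _ _ (isUnit_iff_ne_zero.mpr hdet),
      cplx_add, cplx_one]
  have hMC : cplx M = 1 - cplx A := by rw [hM, cplx_sub, cplx_one]
  -- key eigen equation
  have key : (1 + z) • (cplx A *ᵥ u) = (z - 1) • u := by
    have e1 : cplx ((1 + A) * M⁻¹) *ᵥ x = u + cplx A *ᵥ u := by
      rw [← hxu, Matrix.mulVec_mulVec, hBM, Matrix.add_mulVec, Matrix.one_mulVec]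
    have e2 : z • x = z • u - z • (cplx A *ᵥ u) := by
      rw [← hxu, hMC, Matrix.sub_mulVec, Matrix.one_mulVec, smul_sub]
    have e3 : u + cplx A *ᵥ u = z • u - z • (cplx A *ᵥ u) := by
      rw [← e1, hBx, e2]
    have e4 : (u + cplx A *ᵥ u) + z • (cplx A *ᵥ u) = z • u := by
      rw [e3]; abel
    rw [add_smul, one_smul, sub_smul, one_smul]
    have h5 : cplx A *ᵥ u + z • (cplx A *ᵥ u) =
        ((u + cplx A *ᵥ u) + z • (cplx A *ᵥ u)) - u := by abel
    rw [h5, e4]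
  by_cases hz1 : z = -1
  · exfalso
    rw [hz1] at key
    rw [show (1 : ℂ) + -1 = 0 from by ring, zero_smul] at key
    have h6 : ((-1 : ℂ) - 1) • u = 0 := key.symm
    rcases smul_eq_zero.mp h6 with h | h
    · norm_num at h
    · exact hune h
  · have hz1' : (1 + z) ≠ 0 := fun h => hz1 (by linear_combination h)
    have heig : cplx A *ᵥ u = ((z - 1) / (1 + z)) • u := by
      have := congrArg (fun w => (1 + z)⁻¹ • w) key
      simpa [smul_smul, inv_mul_cancel₀ hz1', div_eq_inv_mul, mul_comm] using this
    have hμ := H _ (mem_spectrum_iff.mpr ⟨u, hune, heig⟩)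
    -- now convert Re((z-1)/(1+z)) < 0 to ‖z‖ < 1
    have hb : 0 < Complex.normSq (1 + z) := Complex.normSq_pos.mpr hz1'
    have hre : ((z - 1) / (1 + z)).re = (Complex.normSq z - 1) / Complex.normSq (1 + z) := by
      rw [Complex.div_re]
      simp only [Complex.normSq_apply, Complex.sub_re, Complex.sub_im, Complex.add_re,
        Complex.add_im, Complex.one_re, Complex.one_im]
      ring
    rw [hre] at hμ
    have hlt : Complex.normSq z < 1 := by
      by_contra hge
      push_neg at hge
      have : 0 ≤ (Complex.normSq z - 1) / Complex.normSq (1 + z) :=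
        div_nonneg (by linarith) hb.le
      linarith
    have : ‖z‖ < 1 := by
      have h1 : ‖z‖ ^ 2 = Complex.normSq z := by
        rw [Complex.sq_norm]
      nlinarith [norm_nonneg z]
    exact_mod_cast this


lemma star_dot_comm (v w : Fin n → ℂ) :
    star v ⬝ᵥ w = starRingEnd ℂ (star w ⬝ᵥ v) := by
  simp only [dotProduct, map_sum, Pi.star_apply, Complex.star_def, _root_.map_mul,
    Complex.conj_conj]
  exact Finset.sum_congr rfl fun i _ => mul_comm _ _

lemma backward_dir {A J R Q : Matrix (Fin n) (Fin n) ℝ}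
    (hJ : Jᵀ = -J) (hRs : Rᵀ = R) (hRp : ∀ v : Fin n → ℝ, v ≠ 0 → 0 < v ⬝ᵥ (R *ᵥ v))
    (hQs : Qᵀ = Q) (hQp : ∀ v : Fin n → ℝ, v ≠ 0 → 0 < v ⬝ᵥ (Q *ᵥ v))
    (hA : A = (J - R) * Q) :
    ∀ μ ∈ spectrum ℂ (A.map ((↑) : ℝ → ℂ)), μ.re < 0 := by
  intro μ hμ
  obtain ⟨x, hx, hEig⟩ := mem_spectrum_iff.mp hμ
  have hQdet : Q.det ≠ 0 := by
    intro h
    obtain ⟨v, hv, hQv⟩ := (Matrix.exists_mulVec_eq_zero_iff).mpr h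
    have := hQp v hv
    rw [hQv] at this
    simp at this
  set Q' := cplx Q with hQ'
  have hQ'det : Q'.det ≠ 0 := by
    rw [hQ', cplx_det]
    exact_mod_cast hQdet
  set y := Q' *ᵥ x with hy
  have hyne : y ≠ 0 := fun h => hx (Matrix.eq_zero_of_mulVec_eq_zero hQ'det h)
  set c := star x ⬝ᵥ (Q' *ᵥ x) with hc
  have hcim : c.im = 0 := symm_quad_im hQs x
  have hcre : 0 < c.re := pos_quad_re hQp hx
  have hconj : star y ⬝ᵥ x = c := by
    rw [star_dot_comm, hy, ← hc, Complex.conj_eq_iff_im]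
    exact hcim
  have key1 : star y ⬝ᵥ ((A.map ((↑) : ℝ → ℂ)) *ᵥ x) = μ * c := by
    rw [hEig, dotProduct_smul, hconj, smul_eq_mul]
  have hA' : A.map ((↑) : ℝ → ℂ) = (cplx J - cplx R) * Q' := by
    rw [hA]
    show cplx ((J - R) * Q) = _
    rw [cplx_mul, cplx_sub]
  have key2 : star y ⬝ᵥ ((A.map ((↑) : ℝ → ℂ)) *ᵥ x) =
      star y ⬝ᵥ ((cplx J) *ᵥ y) - star y ⬝ᵥ ((cplx R) *ᵥ y) := by
    rw [hA', ← Matrix.mulVec_mulVec, ← hy, Matrix.sub_mulVec, dotProduct_sub]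
  have hre : (μ * c).re = μ.re * c.re := by
    rw [Complex.mul_re, hcim, mul_zero, sub_zero]
  have hJre : (star y ⬝ᵥ ((cplx J) *ᵥ y)).re = 0 := skew_quad_re hJ y
  have hRre : 0 < (star y ⬝ᵥ ((cplx R) *ᵥ y)).re := pos_quad_re hRp hyne
  have : μ.re * c.re < 0 := by
    rw [← hre, ← key1, key2, Complex.sub_re, hJre, zero_sub]
    linarith
  nlinarith


section Analysis2

attribute [local instance] Matrix.frobeniusSeminormedAddCommGroup
  Matrix.frobeniusNormedAddCommGroup Matrix.frobeniusNormedSpace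
  Matrix.frobeniusNormedRing Matrix.frobeniusNormedAlgebra

lemma specrad_lt [Nonempty (Fin n)] {B : Matrix (Fin n) (Fin n) ℝ}
    (h : ∀ z ∈ spectrum ℂ (cplx B), ‖z‖₊ < 1) : spectralRadius ℂ (cplx B) < 1 := by
  haveI : CompleteSpace (Matrix (Fin n) (Fin n) ℂ) := FiniteDimensional.complete ℂ _
  have h2 := spectrum.spectralRadius_lt_of_forall_lt (cplx B) (r := 1) h
  simpa using h2

end Analysis2

lemma quad_transpose (S : Matrix (Fin n) (Fin n) ℝ) (v : Fin n → ℝ) :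
    v ⬝ᵥ (Sᵀ *ᵥ v) = v ⬝ᵥ (S *ᵥ v) := by
  rw [Matrix.mulVec_transpose, dotProduct_comm, ← Matrix.dotProduct_mulVec]

lemma forward_dir [Nonempty (Fin n)] {A : Matrix (Fin n) (Fin n) ℝ}
    (H : ∀ μ ∈ spectrum ℂ (A.map ((↑) : ℝ → ℂ)), μ.re < 0) :
    ∃ J R Q : Matrix (Fin n) (Fin n) ℝ,
      Jᵀ = -J ∧
      (Rᵀ = R ∧ ∀ v : Fin n → ℝ, v ≠ 0 → 0 < v ⬝ᵥ (R *ᵥ v)) ∧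
      (Qᵀ = Q ∧ ∀ v : Fin n → ℝ, v ≠ 0 → 0 < v ⬝ᵥ (Q *ᵥ v)) ∧
      A = (J - R) * Q := by
  have H' : ∀ μ ∈ spectrum ℂ (cplx A), μ.re < 0 := H
  obtain ⟨hdet, hspec⟩ := B_spec H'
  set M : Matrix (Fin n) (Fin n) ℝ := 1 - A with hMdef
  set B : Matrix (Fin n) (Fin n) ℝ := (1 + A) * M⁻¹ with hBdef
  have hrad : spectralRadius ℂ (cplx B) < 1 := specrad_lt hspec
  obtain ⟨P, hPsym, hPpos, hStein⟩ := lyap_exists hrad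
  have hMu : IsUnit M.det := isUnit_iff_ne_zero.mpr hdet
  have hBM : B * M = 1 + A := Matrix.nonsing_inv_mul_cancel_right _ _ hMu
  have hMt : Mᵀ = 1 - Aᵀ := by rw [hMdef, Matrix.transpose_sub, Matrix.transpose_one]
  have hMtBt : Mᵀ * Bᵀ = 1 + Aᵀ := by
    rw [← Matrix.transpose_mul, hBM, Matrix.transpose_add, Matrix.transpose_one]
  have hBPB : Bᵀ * P * B = P - 1 := by
    have h1 : Bᵀ * P * B = P - (P - Bᵀ * P * B) := by abel
    rw [h1, hStein]
  have expand : Mᵀ * (Bᵀ * P * B) * M = (1 + Aᵀ) * P * (1 + A) := by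
    calc Mᵀ * (Bᵀ * P * B) * M = (Mᵀ * Bᵀ) * P * (B * M) := by noncomm_ring
    _ = _ := by rw [hMtBt, hBM]
  have main : (1 + Aᵀ) * P * (1 + A) = (1 - Aᵀ) * P * (1 - A) - Mᵀ * M := by
    calc (1 + Aᵀ) * P * (1 + A) = Mᵀ * (Bᵀ * P * B) * M := expand.symm
    _ = Mᵀ * (P - 1) * M := by rw [hBPB]
    _ = Mᵀ * P * M - Mᵀ * M := by noncomm_ring
    _ = (1 - Aᵀ) * P * (1 - A) - Mᵀ * M := by rw [hMt, hMdef]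
  have hsum2 : (Aᵀ * P + P * A) + (Aᵀ * P + P * A) = -(Mᵀ * M) := by
    have hq : (Aᵀ * P + P * A) + (Aᵀ * P + P * A) =
        (1 + Aᵀ) * P * (1 + A) - (1 - Aᵀ) * P * (1 - A) := by noncomm_ring
    rw [hq, main]
    abel
  -- negativity of the Lyapunov quadratic form
  have hLyapNeg : ∀ w : Fin n → ℝ, w ≠ 0 → w ⬝ᵥ ((Aᵀ * P + P * A) *ᵥ w) < 0 := by
    intro w hw
    have hMw : M *ᵥ w ≠ 0 := fun h => hw (Matrix.eq_zero_of_mulVec_eq_zero hdet h)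
    have hMM : 0 < w ⬝ᵥ ((Mᵀ * M) *ᵥ w) := by
      rw [← Matrix.mulVec_mulVec, Matrix.dotProduct_mulVec, Matrix.vecMul_transpose]
      exact dot_self_pos hMw
    have h2 : w ⬝ᵥ ((Aᵀ * P + P * A) *ᵥ w) + w ⬝ᵥ ((Aᵀ * P + P * A) *ᵥ w) =
        -(w ⬝ᵥ ((Mᵀ * M) *ᵥ w)) := by
      have h3 := congrArg (fun N => w ⬝ᵥ (N *ᵥ w)) hsum2
      simpa only [Matrix.add_mulVec, dotProduct_add, Matrix.neg_mulVec, dotProduct_neg] using h3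
    linarith
  -- P is invertible
  have hPdet : P.det ≠ 0 := by
    intro h0
    obtain ⟨v, hv, hPv⟩ := Matrix.exists_mulVec_eq_zero_iff.mpr h0
    have := hPpos v hv
    rw [hPv] at this
    simp at this
  have hPu : IsUnit P.det := isUnit_iff_ne_zero.mpr hPdet
  set Pi : Matrix (Fin n) (Fin n) ℝ := P⁻¹ with hPidef
  have hPit : Piᵀ = Pi := by rw [hPidef, Matrix.transpose_nonsing_inv, hPsym]
  set K : Matrix (Fin n) (Fin n) ℝ := A * Pi with hKdef
  refine ⟨(2⁻¹ : ℝ) • (K - Kᵀ), (-(2⁻¹ : ℝ)) • (K + Kᵀ), P, ?_, ⟨?_, ?_⟩, ⟨hPsym, hPpos⟩, ?_⟩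
  · rw [Matrix.transpose_smul, Matrix.transpose_sub, Matrix.transpose_transpose, ← smul_neg,
      neg_sub]
  · rw [Matrix.transpose_smul, Matrix.transpose_add, Matrix.transpose_transpose, add_comm]
  · -- positivity of R
    intro v hv
    set w : Fin n → ℝ := Pi *ᵥ v with hwdef
    have hvw : P *ᵥ w = v := by
      rw [hwdef, Matrix.mulVec_mulVec, Matrix.mul_nonsing_inv _ hPu, Matrix.one_mulVec]
    have hwne : w ≠ 0 := by
      intro h0
      rw [h0, Matrix.mulVec_zero] at hvw
      exact hv hvw.symm
    have hKv : K *ᵥ v = A *ᵥ w := by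
      rw [← hvw, Matrix.mulVec_mulVec, hKdef, Matrix.mul_assoc,
        Matrix.nonsing_inv_mul _ hPu, Matrix.mul_one]
    have hKq : v ⬝ᵥ (K *ᵥ v) = w ⬝ᵥ ((P * A) *ᵥ w) := by
      rw [hKv, ← hvw, ← Matrix.vecMul_transpose, ← Matrix.dotProduct_mulVec,
        Matrix.mulVec_mulVec, hPsym]
    have hKtq : v ⬝ᵥ (Kᵀ *ᵥ v) = v ⬝ᵥ (K *ᵥ v) := quad_transpose K v
    have hAq : w ⬝ᵥ ((Aᵀ * P) *ᵥ w) = w ⬝ᵥ ((P * A) *ᵥ w) := by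
      have h4 : (P * A)ᵀ = Aᵀ * P := by rw [Matrix.transpose_mul, hPsym]
      rw [← h4, quad_transpose]
    have hneg := hLyapNeg w hwne
    rw [Matrix.add_mulVec, dotProduct_add, hAq] at hneg
    have hRv : v ⬝ᵥ (((-(2⁻¹ : ℝ)) • (K + Kᵀ)) *ᵥ v) =
        -(2⁻¹ : ℝ) * (v ⬝ᵥ ((K + Kᵀ) *ᵥ v)) := by
      rw [Matrix.smul_mulVec, dotProduct_smul, smul_eq_mul]
    rw [hRv, Matrix.add_mulVec, dotProduct_add, hKtq, hKq]
    linarith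
  · -- A = (J - R) * P
    have hJR : (2⁻¹ : ℝ) • (K - Kᵀ) - (-(2⁻¹ : ℝ)) • (K + Kᵀ) = K := by
      rw [neg_smul, sub_neg_eq_add, ← smul_add]
      have : K - Kᵀ + (K + Kᵀ) = K + K := by abel
      rw [this, ← two_smul ℝ K, smul_smul]
      norm_num
    rw [hJR, hKdef, Matrix.mul_assoc, Matrix.nonsing_inv_mul _ hPu, Matrix.mul_one]

end Hur

open Hur in
/-- A real matrix `A` is Hurwitz if and only if it admits a decomposition
`A = (J - R) Q` with `J` skew-symmetric and `R`, `Q` positive definite. -/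
theorem hurwitz_iff_decomposition (n : ℕ) (A : Matrix (Fin n) (Fin n) ℝ) :
    (∀ μ ∈ spectrum ℂ (A.map ((↑) : ℝ → ℂ)), μ.re < 0) ↔
    ∃ J R Q : Matrix (Fin n) (Fin n) ℝ,
      Jᵀ = -J ∧
      (Rᵀ = R ∧ ∀ v : Fin n → ℝ, v ≠ 0 → 0 < v ⬝ᵥ (R *ᵥ v)) ∧
      (Qᵀ = Q ∧ ∀ v : Fin n → ℝ, v ≠ 0 → 0 < v ⬝ᵥ (Q *ᵥ v)) ∧
      A = (J - R) * Q := by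
  rcases Nat.eq_zero_or_pos n with hn | hn
  · subst hn
    constructor
    · intro _
      refine ⟨0, 1, 1, ?_, ⟨?_, ?_⟩, ⟨?_, ?_⟩, ?_⟩
      · ext i j; exact i.elim0
      · ext i j; exact i.elim0
      · intro v hv; exact absurd (funext fun i => i.elim0) hv
      · ext i j; exact i.elim0
      · intro v hv; exact absurd (funext fun i => i.elim0) hv
      · ext i j; exact i.elim0
    · intro _ μ hμ
      exfalso
      rw [spectrum.mem_iff] at hμ
      exact hμ (isUnit_of_subsingleton _)
  · haveI : Nonempty (Fin n) := ⟨⟨0, hn⟩⟩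
    constructor
    · exact forward_dir
    · rintro ⟨J, R, Q, hJ, ⟨hRs, hRp⟩, ⟨hQs, hQp⟩, hA⟩
      exact backward_dir hJ hRs hRp hQs hQp hA
end

section
/- Let n be a natural number and let J̄, R̄, Q̄ be arbitrary real n×n matrices. Then every eigenvalue μ of the matrix A = (J̄ − J̄ᵀ − R̄R̄ᵀ)·(Q̄Q̄ᵀ) (i.e., every μ in the spectrum over ℂ of the complexification of A) satisfies Re(μ) ≤ 0. In other words, the unconstrained parameterization A = (J̄ − J̄ᵀ − R̄R̄ᵀ)Q̄Q̄ᵀ always produces a matrix whose eigenvalues lie in the closed left half complex plane. -/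
open Matrix

namespace UnconstrainedStableAux

noncomputable def cm (n : ℕ) (X : Matrix (Fin n) (Fin n) ℝ) : Matrix (Fin n) (Fin n) ℂ :=
  X.map ((↑) : ℝ → ℂ)

lemma cm_conjTranspose {n : ℕ} (X : Matrix (Fin n) (Fin n) ℝ) :
    (cm n X)ᴴ = cm n Xᵀ := by
  ext i j
  simp [cm, conjTranspose_apply, Complex.conj_ofReal]

lemma cm_mul {n : ℕ} (X Y : Matrix (Fin n) (Fin n) ℝ) :
    cm n (X * Y) = cm n X * cm n Y := by
  ext i j
  simp only [cm, map_apply, mul_apply]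
  push_cast
  rfl

lemma cm_sub {n : ℕ} (X Y : Matrix (Fin n) (Fin n) ℝ) :
    cm n (X - Y) = cm n X - cm n Y := by
  ext i j; simp [cm]

lemma star_dot_self {n : ℕ} (u : Fin n → ℂ) :
    star u ⬝ᵥ u = ((∑ i, Complex.normSq (u i) : ℝ) : ℂ) := by
  push_cast
  simp only [dotProduct, Pi.star_apply, Complex.star_def]
  congr 1
  ext i
  rw [mul_comm, Complex.mul_conj]

end UnconstrainedStableAux

open UnconstrainedStableAux

/-- The unconstrained parameterization `A = (J̄ - J̄ᵀ - R̄ R̄ᵀ)(Q̄ Q̄ᵀ)` always yields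
a matrix whose eigenvalues lie in the closed left half complex plane. -/
theorem unconstrained_parameterization_stable (n : ℕ)
    (Jb Rb Qb : Matrix (Fin n) (Fin n) ℝ) :
    ∀ μ ∈ spectrum ℂ (((Jb - Jbᵀ - Rb * Rbᵀ) * (Qb * Qbᵀ)).map ((↑) : ℝ → ℂ)),
      μ.re ≤ 0 := by
  intro μ hμ
  set M : Matrix (Fin n) (Fin n) ℂ :=
    ((Jb - Jbᵀ - Rb * Rbᵀ) * (Qb * Qbᵀ)).map ((↑) : ℝ → ℂ) with hMdef
  -- get an eigenvector
  rw [← AlgEquiv.spectrum_eq (Matrix.toLinAlgEquiv (Pi.basisFun ℂ (Fin n))),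
    ← Module.End.hasEigenvalue_iff_mem_spectrum] at hμ
  obtain ⟨v, hv⟩ := hμ.exists_hasEigenvector
  have hv0 : v ≠ 0 := hv.right
  have hMv : M *ᵥ v = μ • v := by
    have := hv.apply_eq_smul
    rw [Matrix.toLinAlgEquiv_apply] at this
    rw [← this]
    funext i
    simp [Pi.single_apply, mulVec, dotProduct, Pi.basisFun_repr]
  -- complexified pieces
  set Jc := cm n Jb with hJc
  set Rc := cm n Rb with hRc
  set Qc := cm n Qb with hQc
  set B : Matrix (Fin n) (Fin n) ℂ := Jc - Jcᵀ - Rc * Rcᵀ with hB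
  set P : Matrix (Fin n) (Fin n) ℂ := Qc * Qcᵀ with hP
  have hcmT : ∀ X : Matrix (Fin n) (Fin n) ℝ, cm n Xᵀ = (cm n X)ᵀ := by
    intro X; ext i j; simp [cm]
  have hMBP : M = B * P := by
    rw [hMdef, show ((Jb - Jbᵀ - Rb * Rbᵀ) * (Qb * Qbᵀ)).map ((↑) : ℝ → ℂ) =
        cm n ((Jb - Jbᵀ - Rb * Rbᵀ) * (Qb * Qbᵀ)) from rfl,
      cm_mul, cm_sub, cm_sub, cm_mul, cm_mul, hcmT, hcmT, hcmT]
  -- Hermitian facts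
  have hQH : Qcᵀᴴ = Qc := by rw [hQc, ← hcmT, cm_conjTranspose, transpose_transpose]
  have hRH : Rcᵀᴴ = Rc := by rw [hRc, ← hcmT, cm_conjTranspose, transpose_transpose]
  have hPH : Pᴴ = P := by
    rw [hP, conjTranspose_mul, hQH]
    congr 1
    rw [hQc, ← hcmT, cm_conjTranspose]
  have hBH : Bᴴ = Jcᵀ - Jc - Rc * Rcᵀ := by
    rw [hB, conjTranspose_sub, conjTranspose_sub, conjTranspose_mul, hRH]
    congr 2
    · rw [hJc, cm_conjTranspose, hcmT]
    · rw [hJc, ← hcmT, cm_conjTranspose, transpose_transpose]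
    · rw [hRc, ← hcmT, cm_conjTranspose]
  -- vectors
  set u : Fin n → ℂ := Qcᵀ *ᵥ v with hu
  set w : Fin n → ℂ := P *ᵥ v with hw
  set r : Fin n → ℂ := Rcᵀ *ᵥ w with hr
  -- Fact A : star v ⬝ᵥ w = star u ⬝ᵥ u
  have factA : star v ⬝ᵥ w = star u ⬝ᵥ u := by
    have h1 : w = Qc *ᵥ u := by rw [hw, hu, mulVec_mulVec, hP]
    rw [h1, dotProduct_mulVec]
    congr 1
    rw [hu, star_mulVec, hQH]
  -- star w = vecMul (star v) P
  have hstarw : star w = P.vecMul (star v) := by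
    rw [hw, star_mulVec, hPH]
  -- Fact B : star w ⬝ᵥ B *ᵥ w = μ * (star u ⬝ᵥ u)
  have factB : star w ⬝ᵥ (B *ᵥ w) = μ * (star u ⬝ᵥ u) := by
    have h1 : B *ᵥ w = μ • v := by
      rw [hw, mulVec_mulVec, ← hMBP, hMv]
    rw [h1, hstarw]
    rw [← dotProduct_mulVec]
    rw [mulVec_smul]
    rw [dotProduct_smul, ← hw, factA]
    simp [smul_eq_mul]
  -- Fact C : star w ⬝ᵥ (B *ᵥ w) + star (star w ⬝ᵥ (B *ᵥ w)) = -2 * (star r ⬝ᵥ r)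
  have factC : star w ⬝ᵥ (B *ᵥ w) + star (star w ⬝ᵥ (B *ᵥ w)) = -2 * (star r ⬝ᵥ r) := by
    have hconj : star (star w ⬝ᵥ (B *ᵥ w)) = star w ⬝ᵥ (Bᴴ *ᵥ w) := by
      rw [star_dotProduct, star_star, star_mulVec, ← dotProduct_mulVec]
    rw [hconj, ← dotProduct_add, ← add_mulVec]
    have hBsum : B + Bᴴ = (-2 : ℂ) • (Rc * Rcᵀ) := by
      rw [hB, hBH]; ring_nf; module
    rw [hBsum, smul_mulVec, dotProduct_smul]
    have : star w ⬝ᵥ ((Rc * Rcᵀ) *ᵥ w) = star r ⬝ᵥ r := by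
      rw [← mulVec_mulVec, dotProduct_mulVec]
      congr 1
      rw [hr, star_mulVec Rcᵀ w, hRH]
    rw [this]
    simp [smul_eq_mul]
  -- put together
  have hus := star_dot_self u
  have hrs := star_dot_self r
  set a : ℝ := ∑ i, Complex.normSq (u i) with ha
  set c : ℝ := ∑ i, Complex.normSq (r i) with hc
  have ha0 : 0 ≤ a := Finset.sum_nonneg fun i _ => Complex.normSq_nonneg _
  have hc0 : 0 ≤ c := Finset.sum_nonneg fun i _ => Complex.normSq_nonneg _
  have key : μ.re * a = -c := by
    have h := factC
    rw [factB, hus, hrs] at h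
    have hre := congrArg Complex.re h
    simp [Complex.add_re, Complex.mul_re, Complex.ofReal_re, Complex.ofReal_im] at hre
    linarith
  rcases eq_or_lt_of_le ha0 with haz | hap
  · -- a = 0 : then u = 0, w = 0, μ = 0
    have hu0 : u = 0 := by
      funext i
      have : Complex.normSq (u i) = 0 := by
        have := (Finset.sum_eq_zero_iff_of_nonneg
          (fun i _ => Complex.normSq_nonneg (u i))).mp haz.symm i (Finset.mem_univ i)
        exact this
      exact Complex.normSq_eq_zero.mp this
    have hw0 : w = 0 := by
      have h1 : w = Qc *ᵥ u := by rw [hw, hu, mulVec_mulVec, hP]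
      rw [h1, hu0, mulVec_zero]
    have hmu0 : μ • v = 0 := by
      have h1 : B *ᵥ w = μ • v := by rw [hw, mulVec_mulVec, ← hMBP, hMv]
      rw [hw0, mulVec_zero] at h1
      exact h1.symm
    have : μ = 0 := by
      by_contra hne
      exact hv0 (by simpa [hne] using congrArg (fun x => μ⁻¹ • x) hmu0)
    simp [this]
  · -- a > 0
    by_contra h
    push_neg at h
    nlinarith [mul_pos h hap]
end

section
/- Let n be a natural number, let J̄, R̄, Q̄ be arbitrary real n×n matrices, and set A = (J̄ − J̄ᵀ − R̄R̄ᵀ)·(Q̄Q̄ᵀ). Let x : ℝ → ℝⁿ satisfy x' (t) = A x(t) at every t ∈ ℝ. Then the function V(t) = (1/2)·x(t)ᵀ(Q̄Q̄ᵀ) x(t) is antitone (nonincreasing) on ℝ. -/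
open Matrix

/-- For `A = (J̄ - J̄ᵀ - R̄ R̄ᵀ)(Q̄ Q̄ᵀ)` with arbitrary `J̄, R̄, Q̄`, along any global
solution of `x' = A x` the function `V(t) = (1/2) x(t)ᵀ (Q̄ Q̄ᵀ) x(t)` is
nonincreasing. -/
theorem unconstrained_lyapunov_antitone (n : ℕ)
    (Jb Rb Qb A : Matrix (Fin n) (Fin n) ℝ)
    (hA : A = (Jb - Jbᵀ - Rb * Rbᵀ) * (Qb * Qbᵀ))
    (x : ℝ → (Fin n → ℝ))
    (hx : ∀ t : ℝ, HasDerivAt x (A *ᵥ x t) t) :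
    Antitone (fun t => (1 / 2 : ℝ) * (x t ⬝ᵥ ((Qb * Qbᵀ) *ᵥ x t))) := by
  set Q : Matrix (Fin n) (Fin n) ℝ := Qb * Qbᵀ with hQ
  have hQsymm : Qᵀ = Q := by rw [hQ, transpose_mul, transpose_transpose]
  clear_value Q
  -- derivative of V
  have hV : ∀ t : ℝ, HasDerivAt (fun t => (1 / 2 : ℝ) * (x t ⬝ᵥ (Q *ᵥ x t)))
      ((1/2 : ℝ) * ((A *ᵥ x t) ⬝ᵥ (Q *ᵥ x t) + x t ⬝ᵥ (Q *ᵥ (A *ᵥ x t)))) t := by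
    intro t
    have hxi : ∀ i, HasDerivAt (fun t => x t i) ((A *ᵥ x t) i) t :=
      fun i => hasDerivAt_pi.1 (hx t) i
    have hdot : HasDerivAt (fun t => x t ⬝ᵥ (Q *ᵥ x t))
        ((A *ᵥ x t) ⬝ᵥ (Q *ᵥ x t) + x t ⬝ᵥ (Q *ᵥ (A *ᵥ x t))) t := by
      have : ∀ i, HasDerivAt (fun t => x t i * (Q *ᵥ x t) i)
          ((A *ᵥ x t) i * (Q *ᵥ x t) i + x t i * (Q *ᵥ (A *ᵥ x t)) i) t := by
        intro i
        have hQx : HasDerivAt (fun t => (Q *ᵥ x t) i) ((Q *ᵥ (A *ᵥ x t)) i) t := by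
          simp only [mulVec, dotProduct]
          exact HasDerivAt.fun_sum (fun j _ => (hxi j).const_mul (Q i j))
        exact (hxi i).mul hQx
      have := HasDerivAt.fun_sum (fun i (_ : i ∈ Finset.univ) => this i)
      simpa [dotProduct, Finset.sum_add_distrib] using this
    exact hdot.const_mul _
  apply antitone_of_deriv_nonpos
  · exact fun t => ((hV t).differentiableAt)
  · intro t
    rw [(hV t).deriv]
    -- show the quantity is ≤ 0
    have key : (A *ᵥ x t) ⬝ᵥ (Q *ᵥ x t) + x t ⬝ᵥ (Q *ᵥ (A *ᵥ x t))
        = -2 * ((Rbᵀ *ᵥ (Q *ᵥ x t)) ⬝ᵥ (Rbᵀ *ᵥ (Q *ᵥ x t))) := by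
      set y := Q *ᵥ x t with hy
      have h1 : (A *ᵥ x t) ⬝ᵥ y = y ⬝ᵥ ((Jb - Jbᵀ - Rb * Rbᵀ) *ᵥ y) := by
        rw [hA, ← mulVec_mulVec, ← hy, dotProduct_comm]
      have h2 : x t ⬝ᵥ (Q *ᵥ (A *ᵥ x t)) = y ⬝ᵥ ((Jbᵀ - Jb - Rb * Rbᵀ) *ᵥ y) := by
        rw [hA, ← mulVec_mulVec, ← hy, dotProduct_mulVec (x t) Q, ← hQsymm,
          vecMul_transpose, ← hy, dotProduct_mulVec y, ← mulVec_transpose,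
          transpose_sub, transpose_sub, transpose_transpose, transpose_mul,
          transpose_transpose, dotProduct_comm]
      rw [h1, h2, ← dotProduct_add, ← add_mulVec]
      have hsum : (Jb - Jbᵀ - Rb * Rbᵀ) + (Jbᵀ - Jb - Rb * Rbᵀ) = (-2 : ℝ) • (Rb * Rbᵀ) := by
        rw [neg_smul, two_smul]
        abel
      rw [hsum, smul_mulVec, dotProduct_smul, ← mulVec_mulVec,
        dotProduct_mulVec y Rb, ← mulVec_transpose, smul_eq_mul]
    rw [key]
    have hnn : 0 ≤ (Rbᵀ *ᵥ (Q *ᵥ x t)) ⬝ᵥ (Rbᵀ *ᵥ (Q *ᵥ x t)) := by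
      apply Finset.sum_nonneg
      intro i _
      exact mul_self_nonneg _
    nlinarith
end

section
/- Let n be a natural number, let J be a real n×n skew-symmetric matrix, R a real n×n positive semidefinite matrix, Q a real n×n positive definite matrix, and set A = (J − R)Q. If μ is an eigenvalue of the complexification of A and v ∈ ℂⁿ is a corresponding nonzero eigenvector, then Re(μ) · (v* Q v) = −(Qv)* R (Qv), where Q and R act on ℂⁿ via their complexifications and w* z denotes the complex inner product. In particular, since v* Q v > 0, Re(μ) = −(Qv)* R (Qv) / (v* Q v). -/
open Matrix

lemma quad_eq {n : ℕ} (M : Matrix (Fin n) (Fin n) ℝ) (x : Fin n → ℂ) :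
    star x ⬝ᵥ ((M.map ((↑) : ℝ → ℂ)) *ᵥ x) =
      Complex.mk
        ((fun i => (x i).re) ⬝ᵥ (M *ᵥ fun i => (x i).re) +
          (fun i => (x i).im) ⬝ᵥ (M *ᵥ fun i => (x i).im))
        ((fun i => (x i).re) ⬝ᵥ (M *ᵥ fun i => (x i).im) -
          (fun i => (x i).im) ⬝ᵥ (M *ᵥ fun i => (x i).re)) := by
  apply Complex.ext
  · simp only [dotProduct, mulVec, Pi.star_apply, Matrix.map_apply, Finset.mul_sum,
      Complex.re_sum, Complex.add_re, ← Finset.sum_add_distrib]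
    refine Finset.sum_congr rfl fun i _ => Finset.sum_congr rfl fun j _ => ?_
    simp [Complex.mul_re, Complex.mul_im, Complex.star_def]; try ring
  · simp only [dotProduct, mulVec, Pi.star_apply, Matrix.map_apply, Finset.mul_sum,
      Complex.im_sum, Complex.sub_im, ← Finset.sum_sub_distrib]
    refine Finset.sum_congr rfl fun i _ => Finset.sum_congr rfl fun j _ => ?_
    simp [Complex.mul_re, Complex.mul_im, Complex.star_def]; try ring

lemma symm_dot {n : ℕ} {M : Matrix (Fin n) (Fin n) ℝ} (hM : Mᵀ = M) (a b : Fin n → ℝ) :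
    a ⬝ᵥ (M *ᵥ b) = b ⬝ᵥ (M *ᵥ a) := by
  rw [dotProduct_mulVec, ← mulVec_transpose, hM, dotProduct_comm]

lemma skew_dot {n : ℕ} {M : Matrix (Fin n) (Fin n) ℝ} (hM : Mᵀ = -M) (a : Fin n → ℝ) :
    a ⬝ᵥ (M *ᵥ a) = 0 := by
  have h : a ⬝ᵥ (M *ᵥ a) = -(a ⬝ᵥ (M *ᵥ a)) := by
    conv_lhs => rw [dotProduct_mulVec, ← mulVec_transpose, hM, neg_mulVec,
      neg_dotProduct, dotProduct_comm]
  linarith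


/-- For `A = (J - R) Q` with `J` skew-symmetric, `R` positive semidefinite and
`Q` positive definite, if `v ≠ 0` is an eigenvector of the complexification of `A`
with eigenvalue `μ`, then `Re(μ) · (v* Q v) = -(Qv)* R (Qv)`; in particular
`Re(μ) = -(Qv)* R (Qv) / (v* Q v)`. -/
theorem eigenvalue_re_formula (n : ℕ) (J R Q A : Matrix (Fin n) (Fin n) ℝ)
    (hJ : Jᵀ = -J)
    (hRsym : Rᵀ = R) (hRpsd : ∀ v : Fin n → ℝ, 0 ≤ v ⬝ᵥ (R *ᵥ v))
    (hQsym : Qᵀ = Q) (hQpd : ∀ v : Fin n → ℝ, v ≠ 0 → 0 < v ⬝ᵥ (Q *ᵥ v))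
    (hA : A = (J - R) * Q)
    (μ : ℂ) (v : Fin n → ℂ) (hv : v ≠ 0)
    (heig : (A.map ((↑) : ℝ → ℂ)) *ᵥ v = μ • v) :
    (μ.re : ℂ) * (star v ⬝ᵥ ((Q.map ((↑) : ℝ → ℂ)) *ᵥ v)) =
      -(star ((Q.map ((↑) : ℝ → ℂ)) *ᵥ v) ⬝ᵥ
        ((R.map ((↑) : ℝ → ℂ)) *ᵥ ((Q.map ((↑) : ℝ → ℂ)) *ᵥ v))) ∧
    (μ.re : ℂ) =
      -(star ((Q.map ((↑) : ℝ → ℂ)) *ᵥ v) ⬝ᵥ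
        ((R.map ((↑) : ℝ → ℂ)) *ᵥ ((Q.map ((↑) : ℝ → ℂ)) *ᵥ v))) /
      (star v ⬝ᵥ ((Q.map ((↑) : ℝ → ℂ)) *ᵥ v)) := by
  set Jc := J.map ((↑) : ℝ → ℂ) with hJc
  set Rc := R.map ((↑) : ℝ → ℂ) with hRc
  set Qc := Q.map ((↑) : ℝ → ℂ) with hQc
  set w := Qc *ᵥ v with hw
  -- Q psd helper
  have hQnn : ∀ u : Fin n → ℝ, 0 ≤ u ⬝ᵥ (Q *ᵥ u) := fun u => by
    by_cases h : u = 0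
    · simp [h]
    · exact (hQpd u h).le
  -- eigen equation in factored form
  have heig' : (Jc - Rc) *ᵥ w = μ • v := by
    have hmap : A.map ((↑) : ℝ → ℂ) = (Jc - Rc) * Qc := by
      rw [hA]
      ext i j
      simp [hJc, hRc, hQc, Matrix.mul_apply, Matrix.map_apply, Matrix.sub_apply]
    rw [hmap, ← mulVec_mulVec] at heig
    exact heig
  -- real/imag structure of the three quadratic forms
  have hJw : (star w ⬝ᵥ (Jc *ᵥ w)).re = 0 := by
    rw [hJc, quad_eq]
    simp [skew_dot hJ]
  set r : ℝ := (fun i => (w i).re) ⬝ᵥ (R *ᵥ fun i => (w i).re) +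
      (fun i => (w i).im) ⬝ᵥ (R *ᵥ fun i => (w i).im) with hr
  have hRw : star w ⬝ᵥ (Rc *ᵥ w) = (r : ℂ) := by
    rw [hRc, quad_eq]
    apply Complex.ext <;> simp [hr, symm_dot hRsym]
  have hrnn : 0 ≤ r := add_nonneg (hRpsd _) (hRpsd _)
  set qr : ℝ := (fun i => (v i).re) ⬝ᵥ (Q *ᵥ fun i => (v i).re) +
      (fun i => (v i).im) ⬝ᵥ (Q *ᵥ fun i => (v i).im) with hqr
  have hQv : star v ⬝ᵥ (Qc *ᵥ v) = (qr : ℂ) := by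
    rw [hQc, quad_eq]
    apply Complex.ext <;> simp [hqr, symm_dot hQsym]
  have hqrpos : 0 < qr := by
    by_cases ha : (fun i => (v i).re) = (0 : Fin n → ℝ)
    · have hb : (fun i => (v i).im) ≠ 0 := by
        intro hb
        apply hv
        funext i
        have h1 := congrFun ha i
        have h2 := congrFun hb i
        simp only [Pi.zero_apply] at h1 h2
        exact Complex.ext h1 h2
      have := hQpd _ hb
      have := hQnn (fun i => (v i).re)
      rw [hqr]; linarith
    · have := hQpd _ ha
      have := hQnn (fun i => (v i).im)
      rw [hqr]; linarith
  -- Qc is Hermitian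
  have hQcH : Qcᴴ = Qc := by
    ext i j
    simp only [conjTranspose_apply, hQc, Matrix.map_apply, RCLike.star_def, Complex.conj_ofReal]
    have h := congrFun (congrFun hQsym j) i
    rw [transpose_apply] at h
    exact_mod_cast h.symm
  -- star w ⬝ᵥ v = star v ⬝ᵥ w
  have hwv : star w ⬝ᵥ v = star v ⬝ᵥ (Qc *ᵥ v) := by
    rw [hw, star_mulVec, hQcH, ← dotProduct_mulVec]
  -- main energy identity
  have hmain : star w ⬝ᵥ (Jc *ᵥ w) - star w ⬝ᵥ (Rc *ᵥ w) = μ * (qr : ℂ) := by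
    have h1 : star w ⬝ᵥ ((Jc - Rc) *ᵥ w) = μ * (qr : ℂ) := by
      rw [heig']
      rw [dotProduct_smul, smul_eq_mul, hwv, hQv]
    rw [← h1, sub_mulVec, dotProduct_sub]
  have hre : μ.re * qr = -r := by
    have := congrArg Complex.re hmain
    simp only [Complex.sub_re, hJw, hRw, Complex.ofReal_re, Complex.mul_re,
      Complex.ofReal_im, mul_zero, sub_zero, zero_sub] at this
    linarith
  have hgoal1 : (μ.re : ℂ) * (star v ⬝ᵥ (Qc *ᵥ v)) = -(star w ⬝ᵥ (Rc *ᵥ w)) := by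
    rw [hQv, hRw, ← Complex.ofReal_mul, ← Complex.ofReal_neg, hre]
  refine ⟨hgoal1, ?_⟩
  rw [← hgoal1]
  have hqne : star v ⬝ᵥ (Qc *ᵥ v) ≠ 0 := by
    rw [hQv]
    exact_mod_cast hqrpos.ne'
  exact (mul_div_cancel_right₀ _ hqne).symm
end
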